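/- arXiv:2012.14812 — 4 statements merged into one kernel-verified Lean document; each statement's English description precedes it below -/
import Mathlib

section
/- Let f : A → B be a K-linear map with f(1)=1 between commutative unital K-algebras over a field K of characteristic zero. Then the cumulants of f satisfy κ(f)_1 = f and, for every n ≥ 0 and all a_1,…,a_n,b,c ∈ A, the recursion κ(f)_{n+2}(a_1,…,a_n,b,c) = κ(f)_{n+1}(a_1,…,a_n,bc) − Σ_{S ⊆ {1,…,n}} κ(f)_{|S|+1}((a_i)_{i∈S}, b)·κ(f)_{n−|S|+1}((a_j)_{j∉S}, c). -/
open Finset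

/-- The set of partitions of `{0,…,n-1}` into nonempty, pairwise disjoint blocks. -/
def partitionsOf (n : ℕ) : Finset (Finset (Finset (Fin n))) :=
  ((Finset.univ : Finset (Fin n)).powerset.powerset).filter fun P =>
    (∀ s ∈ P, s.Nonempty) ∧ (∀ s ∈ P, ∀ t ∈ P, s ≠ t → s ∩ t = ∅) ∧ P.sup id = Finset.univ

/-- The `n`-th cumulant of a map `f` between commutative rings:
`κ(f)_n(a_1,…,a_n) = Σ_{partitions} (−1)^{k−1}(k−1)! ∏_j f(∏_{i ∈ I_j} a_i)`. -/
noncomputable def cumul {R S : Type*} [CommRing R] [CommRing S]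
    (f : R → S) (n : ℕ) (a : Fin n → R) : S :=
  ∑ P ∈ partitionsOf n,
    ((-1 : ℤ) ^ (P.card - 1) * ((P.card - 1).factorial : ℤ)) • ∏ s ∈ P, f (∏ i ∈ s, a i)

/-- Restriction of a family `a` to a finite subset `s` of its index set. -/
noncomputable def restr {α β : Type*} (a : α → β) (s : Finset α) : Fin s.card → β :=
  fun i => a (s.equivFin.symm i).1

namespace CumulAux

variable {α β : Type*} [DecidableEq α] [DecidableEq β]

def coeff (k : ℕ) : ℤ := (-1) ^ (k - 1) * ((k - 1).factorial : ℤ)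

def partsOn (s : Finset α) : Finset (Finset (Finset α)) :=
  s.powerset.powerset.filter fun P =>
    (∀ t ∈ P, t.Nonempty) ∧ (∀ t ∈ P, ∀ u ∈ P, t ≠ u → t ∩ u = ∅) ∧ P.sup id = s

lemma mem_partsOn {s : Finset α} {P : Finset (Finset α)} :
    P ∈ partsOn s ↔ (∀ t ∈ P, t.Nonempty) ∧
      (∀ t ∈ P, ∀ u ∈ P, t ≠ u → t ∩ u = ∅) ∧ P.sup id = s := by
  simp only [partsOn, mem_filter, mem_powerset, and_iff_right_iff_imp]
  rintro ⟨-, -, h3⟩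
  intro t ht
  simpa using h3 ▸ Finset.le_sup (f := id) ht

noncomputable def cumOn {R S : Type*} [CommRing R] [CommRing S]
    (f : R → S) (a : α → R) (s : Finset α) : S :=
  ∑ P ∈ partsOn s, coeff P.card • ∏ t ∈ P, f (∏ i ∈ t, a i)

lemma cumul_eq_cumOn {R S : Type*} [CommRing R] [CommRing S]
    (f : R → S) (n : ℕ) (a : Fin n → R) :
    cumul f n a = cumOn f a Finset.univ := by
  unfold cumul cumOn partitionsOf partsOn coeff
  exact Finset.sum_congr (by congr) (fun _ _ => rfl)

def blockOf (P : Finset (Finset α)) (x : α) : Finset α := (P.filter fun t => x ∈ t).sup id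

lemma block_subset {s : Finset α} {P : Finset (Finset α)} (hP : P ∈ partsOn s)
    {u : Finset α} (hu : u ∈ P) : u ⊆ s := by
  obtain ⟨-, -, h3⟩ := mem_partsOn.1 hP
  intro x hx
  rw [← h3]
  exact Finset.mem_sup.2 ⟨u, hu, hx⟩

lemma blockOf_eq {P : Finset (Finset α)}
    (hdisj : ∀ t ∈ P, ∀ u ∈ P, t ≠ u → t ∩ u = ∅)
    {u : Finset α} (hu : u ∈ P) {x : α} (hx : x ∈ u) : blockOf P x = u := by
  have h : P.filter (fun t => x ∈ t) = {u} := by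
    ext t
    simp only [mem_filter, mem_singleton]
    constructor
    · rintro ⟨ht, hxt⟩
      by_contra hne
      have := hdisj t ht u hu hne
      have : x ∈ t ∩ u := Finset.mem_inter.2 ⟨hxt, hx⟩
      simp_all
    · rintro rfl; exact ⟨hu, hx⟩
  rw [blockOf, h]; simp

lemma exists_block {s : Finset α} {P : Finset (Finset α)} (hP : P ∈ partsOn s)
    {x : α} (hx : x ∈ s) : ∃ u ∈ P, x ∈ u := by
  obtain ⟨-, -, h3⟩ := mem_partsOn.1 hP
  have : x ∈ P.sup id := h3 ▸ hx
  simpa using (Finset.mem_sup.1 this)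

lemma blockOf_mem {s : Finset α} {P : Finset (Finset α)} (hP : P ∈ partsOn s)
    {x : α} (hx : x ∈ s) : blockOf P x ∈ P ∧ x ∈ blockOf P x := by
  obtain ⟨u, hu, hxu⟩ := exists_block hP hx
  rw [blockOf_eq (mem_partsOn.1 hP).2.1 hu hxu]
  exact ⟨hu, hxu⟩

lemma partsOn_union {s t : Finset α} (hst : Disjoint s t) {P1 P2 : Finset (Finset α)}
    (hP1 : P1 ∈ partsOn s) (hP2 : P2 ∈ partsOn t) : P1 ∪ P2 ∈ partsOn (s ∪ t) := by
  obtain ⟨h11, h12, h13⟩ := mem_partsOn.1 hP1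
  obtain ⟨h21, h22, h23⟩ := mem_partsOn.1 hP2
  refine mem_partsOn.2 ⟨?_, ?_, ?_⟩
  · intro u hu
    rcases Finset.mem_union.1 hu with h | h
    · exact h11 u h
    · exact h21 u h
  · intro u hu v hv hne
    rcases Finset.mem_union.1 hu with h | h <;> rcases Finset.mem_union.1 hv with h' | h'
    · exact h12 u h v h' hne
    · refine Finset.eq_empty_of_forall_notMem fun x hx => ?_
      obtain ⟨hx1, hx2⟩ := Finset.mem_inter.1 hx
      exact (Finset.disjoint_left.1 hst) (block_subset hP1 h hx1) (block_subset hP2 h' hx2)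
    · refine Finset.eq_empty_of_forall_notMem fun x hx => ?_
      obtain ⟨hx1, hx2⟩ := Finset.mem_inter.1 hx
      exact (Finset.disjoint_left.1 hst) (block_subset hP1 h' hx2) (block_subset hP2 h hx1)
    · exact h22 u h v h' hne
  · rw [Finset.sup_union, h13, h23]
    rfl

lemma partsOn_inter_empty {s t : Finset α} (hst : Disjoint s t) {P1 P2 : Finset (Finset α)}
    (hP1 : P1 ∈ partsOn s) (hP2 : P2 ∈ partsOn t) : P1 ∩ P2 = ∅ := by
  refine Finset.eq_empty_of_forall_notMem fun u hu => ?_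
  obtain ⟨hu1, hu2⟩ := Finset.mem_inter.1 hu
  obtain ⟨x, hx⟩ := (mem_partsOn.1 hP1).1 u hu1
  exact (Finset.disjoint_left.1 hst) (block_subset hP1 hu1 hx) (block_subset hP2 hu2 hx)

lemma partsOn_subset {s : Finset α} {P : Finset (Finset α)} (hP : P ∈ partsOn s)
    {P1 : Finset (Finset α)} (h1 : P1 ⊆ P) : P1 ∈ partsOn (P1.sup id) := by
  obtain ⟨ha, hb, -⟩ := mem_partsOn.1 hP
  exact mem_partsOn.2 ⟨fun u hu => ha u (h1 hu),
    fun u hu v hv hne => hb u (h1 hu) v (h1 hv) hne, rfl⟩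

lemma sup_sdiff_eq {s : Finset α} {P : Finset (Finset α)} (hP : P ∈ partsOn s)
    {P1 : Finset (Finset α)} (h1 : P1 ⊆ P) : (P \ P1).sup id = s \ P1.sup id := by
  obtain ⟨ha, hb, hc⟩ := mem_partsOn.1 hP
  ext x
  simp only [Finset.mem_sup, Finset.mem_sdiff, id]
  constructor
  · rintro ⟨u, hu, hxu⟩
    obtain ⟨huP, huP1⟩ := hu
    refine ⟨block_subset hP huP hxu, fun hx => ?_⟩
    obtain ⟨v, hv, hxv⟩ := hx
    have hne : u ≠ v := fun h => huP1 (h ▸ hv)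
    have : x ∈ u ∩ v := Finset.mem_inter.2 ⟨hxu, hxv⟩
    rw [hb u huP v (h1 hv) hne] at this
    simp at this
  · rintro ⟨hxs, hx⟩
    obtain ⟨u, hu, hxu⟩ := exists_block hP hxs
    exact ⟨u, ⟨hu, fun h => hx ⟨u, h, hxu⟩⟩, hxu⟩

lemma partsOn_sdiff {s : Finset α} {P : Finset (Finset α)} (hP : P ∈ partsOn s)
    {P1 : Finset (Finset α)} (h1 : P1 ⊆ P) : P \ P1 ∈ partsOn (s \ P1.sup id) := by
  have := partsOn_subset hP (Finset.sdiff_subset : P \ P1 ⊆ P)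
  rwa [sup_sdiff_eq hP h1] at this

lemma sup_image_id (P : Finset (Finset β)) (g : β → α) :
    (P.image (Finset.image g)).sup id = (P.sup id).image g := by
  induction P using Finset.induction with
  | empty => simp
  | insert _ _ _ ih => simp [Finset.image_insert, Finset.sup_insert, ih, Finset.image_union]

lemma cumOn_image {R S : Type*} [CommRing R] [CommRing S] (f : R → S) (a : α → R)
    {g : β → α} (hg : Function.Injective g) (s : Finset β) :
    cumOn f a (s.image g) = cumOn f (fun i => a (g i)) s := by
  classical
  unfold cumOn
  refine (Finset.sum_nbij' (fun P => P.image (Finset.image g))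
    (fun P => P.image (fun t => t.preimage g hg.injOn)) ?mi ?mj ?ji ?ij ?te).symm
  case mj =>
    intro P hP
    obtain ⟨h1, h2, h3⟩ := mem_partsOn.1 hP
    have hsub : ∀ t ∈ P, t ⊆ s.image g := by
      intro t ht; simpa using h3 ▸ Finset.le_sup (f := id) ht
    have him : ∀ t ∈ P, (t.preimage g hg.injOn).image g = t := by
      intro t ht
      rw [Finset.image_preimage]
      exact Finset.filter_true_of_mem fun x hx => by
        obtain ⟨i, _, rfl⟩ := Finset.mem_image.1 (hsub t ht hx); exact ⟨i, rfl⟩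
    refine mem_partsOn.2 ⟨?_, ?_, ?_⟩
    · intro t ht
      obtain ⟨u, hu, rfl⟩ := Finset.mem_image.1 ht
      obtain ⟨x, hx⟩ := h1 u hu
      have : x ∈ (u.preimage g hg.injOn).image g := (him u hu).symm ▸ hx
      obtain ⟨i, hi, -⟩ := Finset.mem_image.1 this
      exact ⟨i, hi⟩
    · intro t ht u hu hne
      obtain ⟨t', ht', rfl⟩ := Finset.mem_image.1 ht
      obtain ⟨u', hu', rfl⟩ := Finset.mem_image.1 hu
      have hne' : t' ≠ u' := by rintro rfl; exact hne rfl
      ext x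
      simp only [Finset.mem_inter, Finset.mem_preimage, Finset.notMem_empty, iff_false]
      rintro ⟨h4, h5⟩
      have : g x ∈ t' ∩ u' := Finset.mem_inter.2 ⟨h4, h5⟩
      rw [h2 t' ht' u' hu' hne'] at this; simp at this
    · apply Finset.image_injective hg
      rw [← sup_image_id]
      have : (P.image fun t => t.preimage g hg.injOn).image (Finset.image g) = P := by
        rw [Finset.image_image]
        conv_rhs => rw [← Finset.image_id (s := P)]
        exact Finset.image_congr fun t ht => him t ht
      rw [this, h3]
  case mi =>
    intro Q hQ
    obtain ⟨h1, h2, h3⟩ := mem_partsOn.1 hQ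
    refine mem_partsOn.2 ⟨?_, ?_, ?_⟩
    · intro t ht
      obtain ⟨u, hu, rfl⟩ := Finset.mem_image.1 ht
      exact (h1 u hu).image g
    · intro t ht u hu hne
      obtain ⟨t', ht', rfl⟩ := Finset.mem_image.1 ht
      obtain ⟨u', hu', rfl⟩ := Finset.mem_image.1 hu
      have hne' : t' ≠ u' := by rintro rfl; exact hne rfl
      rw [← Finset.image_inter _ _ hg, h2 t' ht' u' hu' hne', Finset.image_empty]
    · rw [sup_image_id, h3]
  case ji =>
    intro Q hQ
    rw [Finset.image_image]
    conv_rhs => rw [← Finset.image_id (s := Q)]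
    refine Finset.image_congr fun t ht => ?_
    ext x
    simp [Finset.mem_preimage, hg.eq_iff]
  case ij =>
    intro P hP
    obtain ⟨h1, h2, h3⟩ := mem_partsOn.1 hP
    have hsub : ∀ t ∈ P, t ⊆ s.image g := by
      intro t ht; simpa using h3 ▸ Finset.le_sup (f := id) ht
    rw [Finset.image_image]
    conv_rhs => rw [← Finset.image_id (s := P)]
    refine Finset.image_congr fun t ht => ?_
    simp only [Function.comp, id]
    rw [Finset.image_preimage]
    exact Finset.filter_true_of_mem fun x hx => by
      obtain ⟨i, _, rfl⟩ := Finset.mem_image.1 (hsub t ht hx); exact ⟨i, rfl⟩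
  case te =>
    intro Q hQ
    rw [Finset.card_image_of_injective _ (Finset.image_injective hg),
      Finset.prod_image (fun t _ u _ h => Finset.image_injective hg h)]
    congr 1
    refine Finset.prod_congr rfl fun t ht => ?_
    rw [Finset.prod_image (fun x _ y _ h => hg h)]


section Merge

variable {n : ℕ}

def proj (n : ℕ) (j : Fin (n+2)) : Fin (n+1) := ⟨min j.1 n, by omega⟩

def lift (n : ℕ) (t : Finset (Fin (n+1))) : Finset (Fin (n+2)) :=
  if Fin.last n ∈ t then insert (Fin.last (n+1)) (t.image Fin.castSucc)
  else t.image Fin.castSucc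

lemma proj_castSucc (i : Fin (n+1)) : proj n (Fin.castSucc i) = i := by
  ext; simp [proj]; omega

lemma proj_last : proj n (Fin.last (n+1)) = Fin.last n := by
  ext; simp [proj]

lemma proj_eq_last_iff {j : Fin (n+2)} :
    proj n j = Fin.last n ↔ j = Fin.castSucc (Fin.last n) ∨ j = Fin.last (n+1) := by
  rw [Fin.ext_iff, Fin.ext_iff, Fin.ext_iff]
  simp [proj, Fin.last]
  omega

lemma proj_inj {j₁ j₂ : Fin (n+2)} (h : proj n j₁ = proj n j₂) :
    j₁ = j₂ ∨ (proj n j₁ = Fin.last n) := by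
  rw [Fin.ext_iff] at h ⊢
  simp [proj, Fin.last] at h ⊢
  omega

lemma mem_lift {t : Finset (Fin (n+1))} {x : Fin (n+2)} :
    x ∈ lift n t ↔ (x = Fin.last (n+1) ∧ Fin.last n ∈ t) ∨ ∃ y ∈ t, Fin.castSucc y = x := by
  by_cases h : Fin.last n ∈ t
  · simp only [lift, if_pos h, Finset.mem_insert, Finset.mem_image]
    aesop
  · simp only [lift, if_neg h, Finset.mem_image]
    aesop

lemma image_proj_lift (t : Finset (Fin (n+1))) : (lift n t).image (proj n) = t := by
  ext x
  simp only [Finset.mem_image]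
  constructor
  · rintro ⟨j, hj, rfl⟩
    rcases mem_lift.1 hj with ⟨rfl, hl⟩ | ⟨y, hy, rfl⟩
    · rwa [proj_last]
    · rwa [proj_castSucc]
  · intro hx
    exact ⟨Fin.castSucc x, mem_lift.2 (Or.inr ⟨x, hx, rfl⟩), proj_castSucc x⟩

lemma lift_injective : Function.Injective (lift n) := fun t u h => by
  rw [← image_proj_lift t, h, image_proj_lift]

lemma castSucc_proj {j : Fin (n+2)} (hj : j ≠ Fin.last (n+1)) :
    Fin.castSucc (proj n j) = j := by
  have hj' : (j : ℕ) ≠ n + 1 := by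
    intro h; apply hj; ext; simpa [Fin.last] using h
  ext; simp [proj]; omega

lemma lift_image_proj {u : Finset (Fin (n+2))}
    (h : Fin.castSucc (Fin.last n) ∈ u ↔ Fin.last (n+1) ∈ u) :
    lift n (u.image (proj n)) = u := by
  ext x
  rw [mem_lift]
  simp only [Finset.mem_image]
  constructor
  · rintro (⟨rfl, j, hj, hpj⟩ | ⟨y, ⟨j, hj, rfl⟩, rfl⟩)
    · rcases proj_eq_last_iff.1 hpj with rfl | rfl
      · exact h.1 hj
      · exact hj
    · by_cases hj' : j = Fin.last (n+1)
      · subst hj'; rw [proj_last]; exact h.2 hj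
      · rw [castSucc_proj hj']; exact hj
  · intro hx
    by_cases hx' : x = Fin.last (n+1)
    · subst hx'; exact Or.inl ⟨rfl, Fin.last (n+1), hx, proj_last⟩
    · exact Or.inr ⟨proj n x, ⟨x, hx, rfl⟩, castSucc_proj hx'⟩

lemma prod_snoc_indep {R : Type*} [CommRing R] (a : Fin n → R) (x y : R)
    {s : Finset (Fin (n+1))} (hs : Fin.last n ∉ s) :
    ∏ i ∈ s, Fin.snoc a x i = ∏ i ∈ s, Fin.snoc a y i := by
  refine Finset.prod_congr rfl fun i hi => ?_
  have h : i ≠ Fin.last n := fun h => hs (h ▸ hi)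
  rw [← Fin.castSucc_castPred i h, Fin.snoc_castSucc, Fin.snoc_castSucc]

lemma prod_lift {R : Type*} [CommRing R] (a : Fin n → R) (b c : R)
    (t : Finset (Fin (n+1))) :
    ∏ i ∈ lift n t, Fin.snoc (Fin.snoc a b) c i = ∏ i ∈ t, Fin.snoc a (b * c) i := by
  have hcs : ∀ s : Finset (Fin (n+1)),
      ∏ i ∈ s.image (Fin.castSucc : Fin (n+1) → Fin (n+2)), Fin.snoc (Fin.snoc a b) c i
        = ∏ i ∈ s, Fin.snoc a b i := by
    intro s
    rw [Finset.prod_image (fun x _ y _ h => Fin.castSucc_injective _ h)]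
    exact Finset.prod_congr rfl fun i _ => by rw [Fin.snoc_castSucc]
  by_cases h : Fin.last n ∈ t
  · have hic : Fin.last (n+1) ∉ t.image Fin.castSucc := by
      simp only [Finset.mem_image]
      rintro ⟨y, -, hy⟩
      exact absurd (congrArg Fin.val hy) (by simp [Fin.last]; omega)
    rw [lift, if_pos h, Finset.prod_insert hic, hcs, Fin.snoc_last,
      ← Finset.mul_prod_erase _ _ h, ← Finset.mul_prod_erase _ _ h,
      Fin.snoc_last, Fin.snoc_last,
      prod_snoc_indep a b (b * c) (Finset.notMem_erase _ _)]
    ring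
  · rw [lift, if_neg h, hcs]
    exact prod_snoc_indep a b (b * c) h

lemma merge_sum {R S : Type*} [CommRing R] [CommRing S] (f : R → S)
    (a : Fin n → R) (b c : R) :
    ∑ P ∈ (partsOn (Finset.univ : Finset (Fin (n+2)))).filter
        (fun P => blockOf P (Fin.last (n+1)) = blockOf P (Fin.castSucc (Fin.last n))),
      coeff P.card • ∏ t ∈ P, f (∏ i ∈ t, (Fin.snoc (Fin.snoc a b) c : Fin (n+2) → R) i) =
    cumOn f (Fin.snoc a (b * c)) (Finset.univ : Finset (Fin (n+1))) := by
  classical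
  unfold cumOn
  have hbc : ∀ P ∈ (partsOn (Finset.univ : Finset (Fin (n+2)))).filter
        (fun P => blockOf P (Fin.last (n+1)) = blockOf P (Fin.castSucc (Fin.last n))),
      ∀ u ∈ P, (Fin.castSucc (Fin.last n) ∈ u ↔ Fin.last (n+1) ∈ u) := by
    intro P hP u hu
    obtain ⟨hP1, hcond⟩ := Finset.mem_filter.1 hP
    have hd := (mem_partsOn.1 hP1).2.1
    constructor
    · intro h
      have h1 : blockOf P (Fin.castSucc (Fin.last n)) = u := blockOf_eq hd hu h
      have h2 := (blockOf_mem hP1 (Finset.mem_univ (Fin.last (n+1)))).2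
      rwa [hcond, h1] at h2
    · intro h
      have h1 : blockOf P (Fin.last (n+1)) = u := blockOf_eq hd hu h
      have h2 := (blockOf_mem hP1 (Finset.mem_univ (Fin.castSucc (Fin.last n)))).2
      rwa [← hcond, h1] at h2
  have hinjP : ∀ P ∈ (partsOn (Finset.univ : Finset (Fin (n+2)))).filter
        (fun P => blockOf P (Fin.last (n+1)) = blockOf P (Fin.castSucc (Fin.last n))),
      Set.InjOn (Finset.image (proj n)) P := by
    intro P hP u1 h1 u2 h2 heq
    rw [← lift_image_proj (hbc P hP u1 h1), heq, lift_image_proj (hbc P hP u2 h2)]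
  refine Finset.sum_nbij' (fun P => P.image (Finset.image (proj n)))
    (fun Q => Q.image (lift n)) ?mi ?mj ?ji ?ij ?te
  case mi =>
    intro P hP
    obtain ⟨hP1, hcond⟩ := Finset.mem_filter.1 hP
    obtain ⟨h1, h2, h3⟩ := mem_partsOn.1 hP1
    refine mem_partsOn.2 ⟨?_, ?_, ?_⟩
    · intro t ht
      obtain ⟨u, hu, rfl⟩ := Finset.mem_image.1 ht
      exact (h1 u hu).image _
    · intro t1 ht1 t2 ht2 hne
      obtain ⟨u1, hu1, rfl⟩ := Finset.mem_image.1 ht1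
      obtain ⟨u2, hu2, rfl⟩ := Finset.mem_image.1 ht2
      have hne' : u1 ≠ u2 := by rintro rfl; exact hne rfl
      have hdisj := h2 u1 hu1 u2 hu2 hne'
      ext x
      simp only [Finset.mem_inter, Finset.mem_image, Finset.notMem_empty, iff_false]
      rintro ⟨⟨j1, hj1, rfl⟩, j2, hj2, hj⟩
      rcases proj_inj hj.symm with rfl | hlast
      · have : j1 ∈ u1 ∩ u2 := Finset.mem_inter.2 ⟨hj1, hj2⟩
        rw [hdisj] at this; simp at this
      · have hc1 : Fin.last (n+1) ∈ u1 := by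
          rcases proj_eq_last_iff.1 hlast with rfl | rfl
          · exact (hbc P hP u1 hu1).1 hj1
          · exact hj1
        have hc2 : Fin.last (n+1) ∈ u2 := by
          rw [hlast] at hj
          rcases proj_eq_last_iff.1 hj with rfl | rfl
          · exact (hbc P hP u2 hu2).1 hj2
          · exact hj2
        have : Fin.last (n+1) ∈ u1 ∩ u2 := Finset.mem_inter.2 ⟨hc1, hc2⟩
        rw [hdisj] at this; simp at this
    · refine Finset.eq_univ_of_forall fun x => ?_
      have : Fin.castSucc x ∈ P.sup id := h3 ▸ Finset.mem_univ _
      obtain ⟨u, hu, hxu⟩ := by simpa using Finset.mem_sup.1 this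
      refine Finset.mem_sup.2 ⟨u.image (proj n), Finset.mem_image_of_mem _ hu, ?_⟩
      exact Finset.mem_image.2 ⟨Fin.castSucc x, hxu, proj_castSucc x⟩
  case mj =>
    intro Q hQ
    obtain ⟨h1, h2, h3⟩ := mem_partsOn.1 hQ
    have hpart : Q.image (lift n) ∈ partsOn (Finset.univ : Finset (Fin (n+2))) := by
      refine mem_partsOn.2 ⟨?_, ?_, ?_⟩
      · intro t ht
        obtain ⟨u, hu, rfl⟩ := Finset.mem_image.1 ht
        obtain ⟨x, hx⟩ := h1 u hu
        exact ⟨Fin.castSucc x, mem_lift.2 (Or.inr ⟨x, hx, rfl⟩)⟩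
      · intro t1 ht1 t2 ht2 hne
        obtain ⟨u1, hu1, rfl⟩ := Finset.mem_image.1 ht1
        obtain ⟨u2, hu2, rfl⟩ := Finset.mem_image.1 ht2
        have hne' : u1 ≠ u2 := by rintro rfl; exact hne rfl
        have hdisj := h2 u1 hu1 u2 hu2 hne'
        ext x
        simp only [Finset.mem_inter, Finset.notMem_empty, iff_false]
        rintro ⟨hx1, hx2⟩
        rcases mem_lift.1 hx1 with ⟨rfl, hl1⟩ | ⟨y1, hy1, rfl⟩
        · rcases mem_lift.1 hx2 with ⟨-, hl2⟩ | ⟨y2, hy2, hy⟩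
          · have : Fin.last n ∈ u1 ∩ u2 := Finset.mem_inter.2 ⟨hl1, hl2⟩
            rw [hdisj] at this; simp at this
          · exact absurd (congrArg Fin.val hy) (by simp [Fin.last]; omega)
        · rcases mem_lift.1 hx2 with ⟨hy, -⟩ | ⟨y2, hy2, hy⟩
          · exact absurd (congrArg Fin.val hy.symm) (by simp [Fin.last]; omega)
          · have : y1 = y2 := Fin.castSucc_injective _ hy.symm
            subst this
            have : y1 ∈ u1 ∩ u2 := Finset.mem_inter.2 ⟨hy1, hy2⟩
            rw [hdisj] at this; simp at this
      · refine Finset.eq_univ_of_forall fun x => ?_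
        by_cases hx : x = Fin.last (n+1)
        · subst hx
          have : Fin.last n ∈ Q.sup id := h3 ▸ Finset.mem_univ _
          obtain ⟨u, hu, hxu⟩ := by simpa using Finset.mem_sup.1 this
          exact Finset.mem_sup.2 ⟨lift n u, Finset.mem_image_of_mem _ hu,
            mem_lift.2 (Or.inl ⟨rfl, hxu⟩)⟩
        · have : proj n x ∈ Q.sup id := h3 ▸ Finset.mem_univ _
          obtain ⟨u, hu, hxu⟩ := by simpa using Finset.mem_sup.1 this
          exact Finset.mem_sup.2 ⟨lift n u, Finset.mem_image_of_mem _ hu,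
            mem_lift.2 (Or.inr ⟨proj n x, hxu, castSucc_proj hx⟩)⟩
    refine Finset.mem_filter.2 ⟨hpart, ?_⟩
    set t0 := blockOf Q (Fin.last n) with ht0
    obtain ⟨ht0m, ht0x⟩ := blockOf_mem hQ (Finset.mem_univ (Fin.last n))
    have hd := (mem_partsOn.1 hpart).2.1
    have hin : lift n t0 ∈ Q.image (lift n) := Finset.mem_image_of_mem _ ht0m
    rw [blockOf_eq hd hin (mem_lift.2 (Or.inl ⟨rfl, ht0x⟩)),
      blockOf_eq hd hin (mem_lift.2 (Or.inr ⟨Fin.last n, ht0x, rfl⟩))]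
  case ji =>
    intro P hP
    rw [Finset.image_image]
    conv_rhs => rw [← Finset.image_id (s := P)]
    exact Finset.image_congr fun u hu => lift_image_proj (hbc P hP u hu)
  case ij =>
    intro Q hQ
    rw [Finset.image_image]
    conv_rhs => rw [← Finset.image_id (s := Q)]
    exact Finset.image_congr fun t ht => image_proj_lift t
  case te =>
    intro P hP
    rw [Finset.card_image_of_injOn (hinjP P hP),
      Finset.prod_image fun u h1 v h2 h => hinjP P hP h1 h2 h]
    congr 1
    refine Finset.prod_congr rfl fun u hu => ?_
    congr 1
    rw [← prod_lift a b c (u.image (proj n)), lift_image_proj (hbc P hP u hu)]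

end Merge

section Split

variable {n : ℕ}

def emb (n : ℕ) (i : Fin n) : Fin (n+2) := ⟨i.1, by omega⟩

lemma emb_injective : Function.Injective (emb n) := fun i j h => by
  have h2 := congrArg Fin.val h
  ext; exact h2

lemma emb_ne_ib (i : Fin n) : emb n i ≠ Fin.castSucc (Fin.last n) := by
  intro h
  have := congrArg Fin.val h
  simp [emb, Fin.last] at this
  omega

lemma emb_ne_ic (i : Fin n) : emb n i ≠ Fin.last (n+1) := by
  intro h
  have := congrArg Fin.val h
  simp [emb, Fin.last] at this
  omega

lemma fin_trichotomy (j : Fin (n+2)) :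
    j = Fin.castSucc (Fin.last n) ∨ j = Fin.last (n+1) ∨ ∃ i : Fin n, emb n i = j := by
  rcases lt_trichotomy (j : ℕ) n with h | h | h
  · exact Or.inr (Or.inr ⟨⟨j, h⟩, by ext; rfl⟩)
  · exact Or.inl (by ext; simpa [Fin.last] using h)
  · refine Or.inr (Or.inl ?_)
    have := j.isLt
    ext; simp [Fin.last]; omega

lemma snoc_emb {R : Type*} (a : Fin n → R) (b c : R) (i : Fin n) :
    (Fin.snoc (Fin.snoc a b) c : Fin (n+2) → R) (emb n i) = a i := by
  have h1 : emb n i = Fin.castSucc (Fin.castSucc i) := by ext; rfl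
  rw [h1, Fin.snoc_castSucc, Fin.snoc_castSucc]

lemma snoc_ib {R : Type*} (a : Fin n → R) (b c : R) :
    (Fin.snoc (Fin.snoc a b) c : Fin (n+2) → R) (Fin.castSucc (Fin.last n)) = b := by
  rw [Fin.snoc_castSucc, Fin.snoc_last]

lemma snoc_ic {R : Type*} (a : Fin n → R) (b c : R) :
    (Fin.snoc (Fin.snoc a b) c : Fin (n+2) → R) (Fin.last (n+1)) = c := by
  rw [Fin.snoc_last]

lemma cumul_restr {R T : Type*} [CommRing R] [CommRing T] (f : R → T)
    (aa : Fin (n+2) → R) (S : Finset (Fin n)) (z : Fin (n+2)) (hz : n ≤ (z : ℕ)) :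
    cumul f (S.card + 1) (Fin.snoc (restr (fun i => aa (emb n i)) S) (aa z)) =
      cumOn f aa (insert z (S.image (emb n))) := by
  classical
  set g : Fin (S.card + 1) → Fin (n+2) :=
    Fin.snoc (fun i => emb n ((S.equivFin.symm i) : Fin n)) z with hg
  have hginj : Function.Injective g := by
    intro i j h
    rcases Fin.eq_castSucc_or_eq_last i with ⟨i', rfl⟩ | rfl <;>
      rcases Fin.eq_castSucc_or_eq_last j with ⟨j', rfl⟩ | rfl
    · rw [hg] at h
      simp only [Fin.snoc_castSucc] at h
      have hv := emb_injective h
      have hv2 : (S.equivFin.symm i') = (S.equivFin.symm j') := Subtype.ext hv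
      rw [congrArg Fin.castSucc (S.equivFin.symm.injective hv2)]
    · exfalso
      rw [hg] at h
      simp only [Fin.snoc_castSucc, Fin.snoc_last] at h
      have h2 := congrArg Fin.val h
      have := ((S.equivFin.symm i') : Fin n).isLt
      simp [emb] at h2
      omega
    · exfalso
      rw [hg] at h
      simp only [Fin.snoc_castSucc, Fin.snoc_last] at h
      have h2 := congrArg Fin.val h
      have := ((S.equivFin.symm j') : Fin n).isLt
      simp [emb] at h2
      omega
    · rfl
  have himg : (Finset.univ : Finset (Fin (S.card + 1))).image g = insert z (S.image (emb n)) := by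
    ext x
    simp only [Finset.mem_image, Finset.mem_univ, true_and, Finset.mem_insert]
    constructor
    · rintro ⟨i, rfl⟩
      rcases Fin.eq_castSucc_or_eq_last i with ⟨i', rfl⟩ | rfl
      · exact Or.inr ⟨_, (S.equivFin.symm i').2, by rw [hg]; simp [Fin.snoc_castSucc]⟩
      · exact Or.inl (by rw [hg]; simp [Fin.snoc_last])
    · rintro (rfl | ⟨i, hi, rfl⟩)
      · exact ⟨Fin.last _, by rw [hg]; simp [Fin.snoc_last]⟩
      · refine ⟨Fin.castSucc (S.equivFin ⟨i, hi⟩), ?_⟩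
        rw [hg]
        simp [Fin.snoc_castSucc]
  have hfun : (fun i => aa (g i)) = Fin.snoc (restr (fun i => aa (emb n i)) S) (aa z) := by
    funext i
    rcases Fin.eq_castSucc_or_eq_last i with ⟨i', rfl⟩ | rfl
    · rw [hg]
      simp only [Fin.snoc_castSucc]
      rfl
    · rw [hg]; simp [Fin.snoc_last]
  rw [cumul_eq_cumOn, ← hfun, ← himg, cumOn_image f aa hginj]

lemma coeff_sum {γ : Type*} [DecidableEq γ] (U : Finset γ) :
    ∑ T ∈ U.powerset, coeff (T.card + 1) * coeff (U.card + 2 - T.card - 1) =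
      - coeff (U.card + 2) := by
  rw [Finset.sum_powerset]
  have hstep : ∀ j ∈ Finset.range (U.card + 1),
      ∑ T ∈ Finset.powersetCard j U, coeff (T.card + 1) * coeff (U.card + 2 - T.card - 1) =
        (-1 : ℤ) ^ U.card * (U.card.factorial : ℤ) := by
    intro j hj
    have hj' : j ≤ U.card := Nat.lt_succ_iff.1 (Finset.mem_range.1 hj)
    have hterm : ∀ T ∈ Finset.powersetCard j U,
        coeff (T.card + 1) * coeff (U.card + 2 - T.card - 1) =
          (-1 : ℤ) ^ j * (j.factorial : ℤ) *
            ((-1 : ℤ) ^ (U.card - j) * ((U.card - j).factorial : ℤ)) := by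
      intro T hT
      have hTc : T.card = j := (Finset.mem_powersetCard.1 hT).2
      have h1 : U.card + 2 - j - 1 = (U.card - j) + 1 := by omega
      rw [hTc, h1]
      unfold coeff
      simp only [Nat.add_sub_cancel]
    rw [Finset.sum_congr rfl hterm, Finset.sum_const, Finset.card_powersetCard, nsmul_eq_mul]
    have h2 : (-1 : ℤ) ^ j * (-1) ^ (U.card - j) = (-1) ^ U.card := by
      rw [← pow_add]
      congr 1
      omega
    have h3 : (U.card.choose j : ℤ) * ((j.factorial : ℤ) * ((U.card - j).factorial : ℤ))
        = (U.card.factorial : ℤ) := by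
      rw_mod_cast [← Nat.choose_mul_factorial_mul_factorial hj']
      push_cast
      ring
    calc (U.card.choose j : ℤ) * ((-1:ℤ) ^ j * (j.factorial : ℤ) *
            ((-1:ℤ) ^ (U.card - j) * ((U.card - j).factorial : ℤ)))
        = ((-1:ℤ) ^ j * (-1) ^ (U.card - j)) *
            ((U.card.choose j : ℤ) * ((j.factorial : ℤ) * ((U.card - j).factorial : ℤ))) := by
          ring
      _ = (-1 : ℤ) ^ U.card * (U.card.factorial : ℤ) := by rw [h2, h3]
  rw [Finset.sum_congr rfl hstep, Finset.sum_const, Finset.card_range, nsmul_eq_mul]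
  unfold coeff
  have h4 : U.card + 2 - 1 = U.card + 1 := rfl
  rw [h4, Nat.factorial_succ]
  push_cast
  ring

lemma Sb_disj_Sc (S : Finset (Fin n)) :
    Disjoint (insert (Fin.castSucc (Fin.last n)) (S.image (emb n)))
      (insert (Fin.last (n+1)) (Sᶜ.image (emb n))) := by
  rw [Finset.disjoint_left]
  intro x hx1 hx2
  rcases Finset.mem_insert.1 hx1 with rfl | hx1'
  · rcases Finset.mem_insert.1 hx2 with h | h
    · exact absurd (congrArg Fin.val h) (by simp [Fin.last])
    · obtain ⟨i, -, hi⟩ := Finset.mem_image.1 h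
      exact emb_ne_ib i hi
  · obtain ⟨i, hiS, rfl⟩ := Finset.mem_image.1 hx1'
    rcases Finset.mem_insert.1 hx2 with h | h
    · exact emb_ne_ic i h
    · obtain ⟨j, hjS, hj⟩ := Finset.mem_image.1 h
      have : j = i := emb_injective hj
      subst this
      exact (Finset.mem_compl.1 hjS) hiS

lemma Sb_union_Sc (S : Finset (Fin n)) :
    insert (Fin.castSucc (Fin.last n)) (S.image (emb n)) ∪
      insert (Fin.last (n+1)) (Sᶜ.image (emb n)) = Finset.univ := by
  refine Finset.eq_univ_of_forall fun j => ?_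
  rcases fin_trichotomy j with rfl | rfl | ⟨i, rfl⟩
  · exact Finset.mem_union_left _ (Finset.mem_insert_self _ _)
  · exact Finset.mem_union_right _ (Finset.mem_insert_self _ _)
  · by_cases hi : i ∈ S
    · exact Finset.mem_union_left _ (Finset.mem_insert_of_mem (Finset.mem_image_of_mem _ hi))
    · exact Finset.mem_union_right _
        (Finset.mem_insert_of_mem (Finset.mem_image_of_mem _ (Finset.mem_compl.2 hi)))

lemma src_facts {S : Finset (Fin n)} {P1 P2 : Finset (Finset (Fin (n+2)))}
    (hP1 : P1 ∈ partsOn (insert (Fin.castSucc (Fin.last n)) (S.image (emb n))))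
    (hP2 : P2 ∈ partsOn (insert (Fin.last (n+1)) (Sᶜ.image (emb n)))) :
    P1 ∪ P2 ∈ partsOn (Finset.univ : Finset (Fin (n+2))) ∧ P1 ∩ P2 = ∅ ∧
      blockOf (P1 ∪ P2) (Fin.castSucc (Fin.last n)) = blockOf P1 (Fin.castSucc (Fin.last n)) ∧
      blockOf (P1 ∪ P2) (Fin.last (n+1)) = blockOf P2 (Fin.last (n+1)) ∧
      blockOf P1 (Fin.castSucc (Fin.last n)) ∈ P1 ∧
      blockOf P2 (Fin.last (n+1)) ∈ P2 := by
  have hdisj := Sb_disj_Sc S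
  have hU : P1 ∪ P2 ∈ partsOn (Finset.univ : Finset (Fin (n+2))) := by
    have := partsOn_union hdisj hP1 hP2
    rwa [Sb_union_Sc] at this
  have hPP : P1 ∩ P2 = ∅ := partsOn_inter_empty hdisj hP1 hP2
  have hBb := blockOf_mem hP1 (Finset.mem_insert_self (Fin.castSucc (Fin.last n)) _)
  have hBc := blockOf_mem hP2 (Finset.mem_insert_self (Fin.last (n+1)) _)
  have hd := (mem_partsOn.1 hU).2.1
  exact ⟨hU, hPP, blockOf_eq hd (Finset.mem_union_left _ hBb.1) hBb.2,
    blockOf_eq hd (Finset.mem_union_right _ hBc.1) hBc.2, hBb.1, hBc.1⟩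

lemma tgt_facts {P T : Finset (Finset (Fin (n+2)))}
    (hP : P ∈ partsOn (Finset.univ : Finset (Fin (n+2))))
    (hne : ¬ blockOf P (Fin.last (n+1)) = blockOf P (Fin.castSucc (Fin.last n)))
    (hT : T ⊆ (P.erase (blockOf P (Fin.castSucc (Fin.last n)))).erase
      (blockOf P (Fin.last (n+1)))) :
    insert (blockOf P (Fin.castSucc (Fin.last n))) T ⊆ P ∧
    blockOf P (Fin.castSucc (Fin.last n)) ∉ T ∧
    insert (Fin.castSucc (Fin.last n))
        ((Finset.univ.filter (fun i => emb n i ∈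
          (insert (blockOf P (Fin.castSucc (Fin.last n))) T).sup id)).image (emb n)) =
      (insert (blockOf P (Fin.castSucc (Fin.last n))) T).sup id ∧
    insert (blockOf P (Fin.castSucc (Fin.last n))) T ∈ partsOn
      (insert (Fin.castSucc (Fin.last n))
        ((Finset.univ.filter (fun i => emb n i ∈
          (insert (blockOf P (Fin.castSucc (Fin.last n))) T).sup id)).image (emb n))) ∧
    P \ insert (blockOf P (Fin.castSucc (Fin.last n))) T ∈ partsOn
      (insert (Fin.last (n+1))
        (((Finset.univ.filter (fun i => emb n i ∈
          (insert (blockOf P (Fin.castSucc (Fin.last n))) T).sup id))ᶜ).image (emb n))) := by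
  have hBb := blockOf_mem hP (Finset.mem_univ (Fin.castSucc (Fin.last n)))
  have hBc := blockOf_mem hP (Finset.mem_univ (Fin.last (n+1)))
  have hd := (mem_partsOn.1 hP).2.1
  have hTP : T ⊆ P := fun u hu => (Finset.mem_erase.1 (Finset.mem_erase.1 (hT hu)).2).2
  have hBbT : blockOf P (Fin.castSucc (Fin.last n)) ∉ T := fun h =>
    (Finset.mem_erase.1 (Finset.mem_erase.1 (hT h)).2).1 rfl
  have hBcT : blockOf P (Fin.last (n+1)) ∉ T := fun h => (Finset.mem_erase.1 (hT h)).1 rfl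
  set P1 : Finset (Finset (Fin (n+2))) :=
    insert (blockOf P (Fin.castSucc (Fin.last n))) T with hP1def
  set S : Finset (Fin n) := Finset.univ.filter (fun i => emb n i ∈ P1.sup id) with hSdef
  have hP1P : P1 ⊆ P := Finset.insert_subset hBb.1 hTP
  have hBcP1 : blockOf P (Fin.last (n+1)) ∉ P1 := by
    rw [hP1def, Finset.mem_insert]
    rintro (h | h)
    · exact hne h
    · exact hBcT h
  have hicV : Fin.last (n+1) ∉ P1.sup id := by
    intro h
    obtain ⟨u, hu, hxu⟩ := Finset.mem_sup.1 h
    have : blockOf P (Fin.last (n+1)) = u := blockOf_eq hd (hP1P hu) hxu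
    exact hBcP1 (this ▸ hu)
  have hibV : Fin.castSucc (Fin.last n) ∈ P1.sup id :=
    Finset.mem_sup.2 ⟨_, Finset.mem_insert_self _ _, hBb.2⟩
  have hV : insert (Fin.castSucc (Fin.last n)) (S.image (emb n)) = P1.sup id := by
    ext j
    rcases fin_trichotomy j with rfl | rfl | ⟨i, rfl⟩
    · simp only [Finset.mem_insert, true_or, true_iff]
      exact hibV
    · simp only [Finset.mem_insert]
      constructor
      · rintro (h | h)
        · exact absurd (congrArg Fin.val h) (by simp [Fin.last])
        · obtain ⟨i, -, hi⟩ := Finset.mem_image.1 h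
          exact absurd hi (emb_ne_ic i)
      · intro h
        exact absurd h hicV
    · simp only [Finset.mem_insert]
      constructor
      · rintro (h | h)
        · exact absurd h (emb_ne_ib i)
        · obtain ⟨i', hi', hie⟩ := Finset.mem_image.1 h
          have : i' = i := emb_injective hie
          subst this
          exact (Finset.mem_filter.1 hi').2
      · intro h
        exact Or.inr (Finset.mem_image_of_mem _ (Finset.mem_filter.2 ⟨Finset.mem_univ _, h⟩))
  refine ⟨hP1P, hBbT, hV, ?_, ?_⟩
  · rw [hV]
    exact partsOn_subset hP hP1P
  · have h := partsOn_sdiff hP hP1P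
    have heq : insert (Fin.last (n+1)) ((Sᶜ).image (emb n)) =
        Finset.univ \ P1.sup id := by
      rw [← hV, ← Sb_union_Sc S]
      exact (Finset.union_sdiff_cancel_left (Sb_disj_Sc S)).symm
    rwa [← heq] at h

def phi (n : ℕ)
    (x : Σ _ : Finset (Fin n), Finset (Finset (Fin (n+2))) × Finset (Finset (Fin (n+2)))) :
    Σ _ : Finset (Finset (Fin (n+2))), Finset (Finset (Fin (n+2))) :=
  ⟨x.2.1 ∪ x.2.2, x.2.1.erase (blockOf x.2.1 (Fin.castSucc (Fin.last n)))⟩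

def psi (n : ℕ)
    (y : Σ _ : Finset (Finset (Fin (n+2))), Finset (Finset (Fin (n+2)))) :
    Σ _ : Finset (Fin n), Finset (Finset (Fin (n+2))) × Finset (Finset (Fin (n+2))) :=
  ⟨Finset.univ.filter
      (fun i => emb n i ∈ (insert (blockOf y.1 (Fin.castSucc (Fin.last n))) y.2).sup id),
    (insert (blockOf y.1 (Fin.castSucc (Fin.last n))) y.2,
      y.1 \ insert (blockOf y.1 (Fin.castSucc (Fin.last n))) y.2)⟩

set_option maxHeartbeats 2000000 in
lemma split_sum {R B' : Type*} [CommRing R] [CommRing B'] (f : R → B') (aa : Fin (n+2) → R) :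
    ∑ S ∈ (Finset.univ : Finset (Fin n)).powerset,
      cumOn f aa (insert (Fin.castSucc (Fin.last n)) (S.image (emb n))) *
        cumOn f aa (insert (Fin.last (n+1)) (Sᶜ.image (emb n))) =
    - ∑ P ∈ (partsOn (Finset.univ : Finset (Fin (n+2)))).filter
        (fun P => ¬ blockOf P (Fin.last (n+1)) = blockOf P (Fin.castSucc (Fin.last n))),
      coeff P.card • ∏ t ∈ P, f (∏ i ∈ t, aa i) := by
  classical
  have hexpand : ∀ S ∈ (Finset.univ : Finset (Fin n)).powerset,
      cumOn f aa (insert (Fin.castSucc (Fin.last n)) (S.image (emb n))) *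
        cumOn f aa (insert (Fin.last (n+1)) (Sᶜ.image (emb n))) =
      ∑ p ∈ partsOn (insert (Fin.castSucc (Fin.last n)) (S.image (emb n))) ×ˢ
          partsOn (insert (Fin.last (n+1)) (Sᶜ.image (emb n))),
        (coeff p.1.card * coeff p.2.card) •
          ((∏ t ∈ p.1, f (∏ i ∈ t, aa i)) * ∏ t ∈ p.2, f (∏ i ∈ t, aa i)) := by
    intro S _
    unfold cumOn
    rw [Finset.sum_mul_sum, Finset.sum_product]
    refine Finset.sum_congr rfl fun P1 _ => Finset.sum_congr rfl fun P2 _ => ?_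
    rw [smul_mul_smul_comm]
  rw [Finset.sum_congr rfl hexpand, Finset.sum_sigma']
  rw [Finset.sum_nbij' (phi n) (psi n) ?mi ?mj ?ji ?ij ?te
    (t := ((partsOn (Finset.univ : Finset (Fin (n+2)))).filter
        (fun P => ¬ blockOf P (Fin.last (n+1)) = blockOf P (Fin.castSucc (Fin.last n)))).sigma
      (fun P => ((P.erase (blockOf P (Fin.castSucc (Fin.last n)))).erase
          (blockOf P (Fin.last (n+1)))).powerset))
    (g := fun y => (coeff (y.2.card + 1) * coeff (y.1.card - y.2.card - 1)) •
      ∏ t ∈ y.1, f (∏ i ∈ t, aa i))]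
  case mi =>
    rintro ⟨S, P1, P2⟩ hx
    rw [Finset.mem_sigma] at hx
    obtain ⟨hS, hp⟩ := hx
    rw [Finset.mem_product] at hp
    dsimp only at hS hp
    obtain ⟨hP1, hP2⟩ := hp
    obtain ⟨hU, hPP, hBbU, hBcU, hBbm, hBcm⟩ := src_facts hP1 hP2
    unfold phi
    rw [Finset.mem_sigma]
    dsimp only
    constructor
    · refine Finset.mem_filter.2 ⟨hU, ?_⟩
      show ¬ blockOf (P1 ∪ P2) (Fin.last (n+1)) = blockOf (P1 ∪ P2) (Fin.castSucc (Fin.last n))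
      rw [hBbU, hBcU]
      intro h
      have : blockOf P2 (Fin.last (n+1)) ∈ P1 ∩ P2 :=
        Finset.mem_inter.2 ⟨h ▸ hBbm, hBcm⟩
      rw [hPP] at this
      simp at this
    · show P1.erase (blockOf P1 (Fin.castSucc (Fin.last n))) ∈ _
      rw [Finset.mem_powerset]
      intro u hu
      obtain ⟨hune, huP1⟩ := Finset.mem_erase.1 hu
      refine Finset.mem_erase.2 ⟨?_, Finset.mem_erase.2 ⟨?_, Finset.mem_union_left _ huP1⟩⟩
      · rw [hBcU]
        intro h
        have : u ∈ P1 ∩ P2 := Finset.mem_inter.2 ⟨huP1, h ▸ hBcm⟩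
        rw [hPP] at this
        simp at this
      · rw [hBbU]
        exact hune
  case mj =>
    rintro ⟨P, T⟩ hy
    rw [Finset.mem_sigma] at hy
    obtain ⟨hPD, hT⟩ := hy
    obtain ⟨hP, hne⟩ := Finset.mem_filter.1 hPD
    obtain ⟨hP1P, hBbT, hV, hP1mem, hP2mem⟩ :=
      tgt_facts hP hne (Finset.mem_powerset.1 hT)
    unfold psi
    rw [Finset.mem_sigma]
    dsimp only
    exact ⟨Finset.mem_powerset.2 (Finset.subset_univ _),
      Finset.mem_product.2 ⟨hP1mem, hP2mem⟩⟩
  case ji =>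
    rintro ⟨S, P1, P2⟩ hx
    rw [Finset.mem_sigma] at hx
    obtain ⟨hS, hp⟩ := hx
    rw [Finset.mem_product] at hp
    dsimp only at hS hp
    obtain ⟨hP1, hP2⟩ := hp
    obtain ⟨hU, hPP, hBbU, hBcU, hBbm, hBcm⟩ := src_facts hP1 hP2
    have hDisj : Disjoint P1 P2 := Finset.disjoint_iff_inter_eq_empty.2 hPP
    show psi n ⟨P1 ∪ P2, P1.erase (blockOf P1 (Fin.castSucc (Fin.last n)))⟩ = _
    unfold psi
    dsimp only
    rw [hBbU, Finset.insert_erase hBbm]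
    have h2 : (P1 ∪ P2) \ P1 = P2 := Finset.union_sdiff_cancel_left hDisj
    have h1 : Finset.univ.filter (fun i => emb n i ∈ P1.sup id) = S := by
      have hsup : P1.sup id = insert (Fin.castSucc (Fin.last n)) (S.image (emb n)) :=
        (mem_partsOn.1 hP1).2.2
      ext i
      simp only [Finset.mem_filter, Finset.mem_univ, true_and, hsup, Finset.mem_insert]
      constructor
      · rintro (h | h)
        · exact absurd h (emb_ne_ib i)
        · obtain ⟨i', hi', hie⟩ := Finset.mem_image.1 h
          exact emb_injective hie ▸ hi'
      · intro h
        exact Or.inr (Finset.mem_image_of_mem _ h)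
    rw [h1, h2]
  case ij =>
    rintro ⟨P, T⟩ hy
    rw [Finset.mem_sigma] at hy
    obtain ⟨hPD, hT⟩ := hy
    dsimp only at hPD hT
    obtain ⟨hP, hne⟩ := Finset.mem_filter.1 hPD
    obtain ⟨hP1P, hBbT, hV, hP1mem, hP2mem⟩ :=
      tgt_facts hP hne (Finset.mem_powerset.1 hT)
    have hBb := blockOf_mem hP (Finset.mem_univ (Fin.castSucc (Fin.last n)))
    show phi n (psi n ⟨P, T⟩) = _
    unfold phi psi
    dsimp only
    have h1 : insert (blockOf P (Fin.castSucc (Fin.last n))) T ∪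
        (P \ insert (blockOf P (Fin.castSucc (Fin.last n))) T) = P :=
      Finset.union_sdiff_of_subset hP1P
    have h2 : blockOf (insert (blockOf P (Fin.castSucc (Fin.last n))) T)
        (Fin.castSucc (Fin.last n)) = blockOf P (Fin.castSucc (Fin.last n)) :=
      blockOf_eq (mem_partsOn.1 hP1mem).2.1 (Finset.mem_insert_self _ _) hBb.2
    rw [h1, h2, Finset.erase_insert hBbT]
  case te =>
    rintro ⟨S, P1, P2⟩ hx
    rw [Finset.mem_sigma] at hx
    obtain ⟨hS, hp⟩ := hx
    rw [Finset.mem_product] at hp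
    dsimp only at hS hp
    obtain ⟨hP1, hP2⟩ := hp
    obtain ⟨hU, hPP, hBbU, hBcU, hBbm, hBcm⟩ := src_facts hP1 hP2
    have hDisj : Disjoint P1 P2 := Finset.disjoint_iff_inter_eq_empty.2 hPP
    unfold phi
    dsimp only
    have hcard : (P1 ∪ P2).card = P1.card + P2.card := Finset.card_union_of_disjoint hDisj
    have hP1pos : 0 < P1.card := Finset.card_pos.2 ⟨_, hBbm⟩
    have hTcard : (P1.erase (blockOf P1 (Fin.castSucc (Fin.last n)))).card = P1.card - 1 :=
      Finset.card_erase_of_mem hBbm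
    have e1 : (P1.erase (blockOf P1 (Fin.castSucc (Fin.last n)))).card + 1 = P1.card := by
      omega
    have e2 : (P1 ∪ P2).card -
        (P1.erase (blockOf P1 (Fin.castSucc (Fin.last n)))).card - 1 = P2.card := by
      omega
    rw [e1, e2, Finset.prod_union hDisj]
  -- now the counting
  rw [Finset.sum_sigma]
  rw [← Finset.sum_neg_distrib]
  refine Finset.sum_congr rfl fun P hP' => ?_
  obtain ⟨hP, hne⟩ := Finset.mem_filter.1 hP'
  have hBb := blockOf_mem hP (Finset.mem_univ (Fin.castSucc (Fin.last n)))
  have hBc := blockOf_mem hP (Finset.mem_univ (Fin.last (n+1)))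
  set U : Finset (Finset (Fin (n+2))) :=
    (P.erase (blockOf P (Fin.castSucc (Fin.last n)))).erase (blockOf P (Fin.last (n+1)))
    with hUdef
  have hBcmem : blockOf P (Fin.last (n+1)) ∈ P.erase (blockOf P (Fin.castSucc (Fin.last n))) :=
    Finset.mem_erase.2 ⟨hne, hBc.1⟩
  have hcard : P.card = U.card + 2 := by
    have h1 : (P.erase (blockOf P (Fin.castSucc (Fin.last n)))).card = P.card - 1 :=
      Finset.card_erase_of_mem hBb.1
    have h2 : U.card = (P.erase (blockOf P (Fin.castSucc (Fin.last n)))).card - 1 :=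
      Finset.card_erase_of_mem hBcmem
    have h3 : 0 < P.card := Finset.card_pos.2 ⟨_, hBb.1⟩
    have h4 : 0 < (P.erase (blockOf P (Fin.castSucc (Fin.last n)))).card :=
      Finset.card_pos.2 ⟨_, hBcmem⟩
    omega
  have hstep : ∀ T ∈ U.powerset,
      (coeff (T.card + 1) * coeff (P.card - T.card - 1)) • ∏ t ∈ P, f (∏ i ∈ t, aa i) =
      (coeff (T.card + 1) * coeff (U.card + 2 - T.card - 1)) • ∏ t ∈ P, f (∏ i ∈ t, aa i) := by
    intro T hT
    rw [hcard]
  rw [Finset.sum_congr rfl hstep, ← Finset.sum_smul, coeff_sum U, ← hcard, neg_smul]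

end Split

end CumulAux

set_option maxHeartbeats 2000000 in
/-- the cumulants of a unital linear map satisfy `κ(f)_1 = f` and the recursion
`κ(f)_{n+2}(a_1,…,a_n,b,c) = κ(f)_{n+1}(a_1,…,a_n,bc)
  − Σ_{S ⊆ {1,…,n}} κ(f)_{|S|+1}((a_i)_{i∈S},b) · κ(f)_{n−|S|+1}((a_j)_{j∉S},c)`. -/
theorem cumulant_recursion (K A B : Type*) [Field K] [CharZero K]
    [CommRing A] [Algebra K A] [CommRing B] [Algebra K B]
    (f : A →ₗ[K] B) (hf : f 1 = 1) :
    (∀ a : Fin 1 → A, cumul (⇑f) 1 a = f (a 0)) ∧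
    (∀ (n : ℕ) (a : Fin n → A) (b c : A),
      cumul (⇑f) (n + 2) (Fin.snoc (Fin.snoc a b) c) =
        cumul (⇑f) (n + 1) (Fin.snoc a (b * c)) -
          ∑ S ∈ (Finset.univ : Finset (Fin n)).powerset,
            cumul (⇑f) (S.card + 1) (Fin.snoc (restr a S) b) *
              cumul (⇑f) (Sᶜ.card + 1) (Fin.snoc (restr a Sᶜ) c)) := by
  constructor
  · intro a
    have h1 : partitionsOf 1 = {{(Finset.univ : Finset (Fin 1))}} := by decide
    rw [cumul, h1]
    simp
  · intro n a b c
    classical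
    rw [CumulAux.cumul_eq_cumOn (⇑f) (n+2)]
    unfold CumulAux.cumOn
    rw [← Finset.sum_filter_add_sum_filter_not
      (CumulAux.partsOn (Finset.univ : Finset (Fin (n+2))))
      (fun P => CumulAux.blockOf P (Fin.last (n+1)) =
        CumulAux.blockOf P (Fin.castSucc (Fin.last n)))]
    rw [CumulAux.merge_sum (⇑f) a b c, ← CumulAux.cumul_eq_cumOn]
    rw [sub_eq_add_neg]
    congr 1
    have hconv : ∀ S ∈ (Finset.univ : Finset (Fin n)).powerset,
        cumul (⇑f) (S.card + 1) (Fin.snoc (restr a S) b) *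
          cumul (⇑f) (Sᶜ.card + 1) (Fin.snoc (restr a Sᶜ) c) =
        CumulAux.cumOn (⇑f) (Fin.snoc (Fin.snoc a b) c)
            (insert (Fin.castSucc (Fin.last n)) (S.image (CumulAux.emb n))) *
          CumulAux.cumOn (⇑f) (Fin.snoc (Fin.snoc a b) c)
            (insert (Fin.last (n+1)) (Sᶜ.image (CumulAux.emb n))) := by
      intro S _
      congr 1
      · have h := CumulAux.cumul_restr (⇑f) (Fin.snoc (Fin.snoc a b) c) S
          (Fin.castSucc (Fin.last n)) (by simp [Fin.last])
        rw [show (fun i => (Fin.snoc (Fin.snoc a b) c : Fin (n+2) → A) (CumulAux.emb n i)) = a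
            from funext (CumulAux.snoc_emb a b c), CumulAux.snoc_ib] at h
        exact h
      · have h := CumulAux.cumul_restr (⇑f) (Fin.snoc (Fin.snoc a b) c) Sᶜ
          (Fin.last (n+1)) (by simp [Fin.last])
        rw [show (fun i => (Fin.snoc (Fin.snoc a b) c : Fin (n+2) → A) (CumulAux.emb n i)) = a
            from funext (CumulAux.snoc_emb a b c), CumulAux.snoc_ic] at h
        exact h
    rw [Finset.sum_congr rfl hconv,
      CumulAux.split_sum (⇑f) (Fin.snoc (Fin.snoc a b) c), neg_neg]
end

section
/- A K-linear map f : A → B with f(1)=1 between commutative unital K-algebras is a homomorphism of K-algebras (i.e. f(ab)=f(a)f(b) for all a,b ∈ A) if and only if the cumulant κ(f)_n vanishes identically for every n ≥ 2. -/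
open Finset

section Parts

variable {α : Type*} [DecidableEq α]

/-- Partitions of an arbitrary finite set. -/
def parts (u : Finset α) : Finset (Finset (Finset α)) :=
  u.powerset.powerset.filter fun P =>
    (∀ s ∈ P, s.Nonempty) ∧ (∀ s ∈ P, ∀ t ∈ P, s ≠ t → s ∩ t = ∅) ∧ P.sup id = u

lemma mem_parts {u : Finset α} {P : Finset (Finset α)} :
    P ∈ parts u ↔
      (∀ s ∈ P, s.Nonempty) ∧ (∀ s ∈ P, ∀ t ∈ P, s ≠ t → s ∩ t = ∅) ∧ P.sup id = u := by
  constructor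
  · intro h
    exact (Finset.mem_filter.1 h).2
  · intro h
    refine Finset.mem_filter.2 ⟨?_, h⟩
    simp only [Finset.mem_powerset]
    intro s hs
    simp only [Finset.mem_powerset]
    have := Finset.le_sup (f := id) hs
    rw [h.2.2] at this
    exact this

lemma partitionsOf_eq (n : ℕ) : partitionsOf n = parts (Finset.univ : Finset (Fin n)) := by
  ext P
  simp only [partitionsOf, parts, Finset.mem_filter]

variable {u : Finset α} {a : α}

lemma parts_blocks_subset {Q : Finset (Finset α)} (hQ : Q ∈ parts u)
    {b : Finset α} (hb : b ∈ Q) : b ⊆ u := by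
  have := Finset.le_sup (f := id) hb
  rw [(mem_parts.1 hQ).2.2] at this
  exact this

lemma empty_not_mem_parts {Q : Finset (Finset α)} (hQ : Q ∈ parts u) : ∅ ∉ Q := by
  intro h
  simpa using (mem_parts.1 hQ).1 ∅ h

lemma a_not_mem_block (ha : a ∉ u) {Q : Finset (Finset α)} (hQ : Q ∈ parts u)
    {b : Finset α} (hb : b ∈ Q) : a ∉ b :=
  fun h => ha (parts_blocks_subset hQ hb h)

lemma insert_cancel {X Y : Finset α} (h1 : a ∉ X) (h2 : a ∉ Y)
    (h : insert a X = insert a Y) : X = Y := by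
  rw [← Finset.erase_insert h1, h, Finset.erase_insert h2]

lemma eq_singleton_of_erase_empty {s : Finset α} (h : a ∈ s) (h2 : s.erase a = ∅) :
    s = {a} := by
  ext x
  simp only [Finset.mem_singleton]
  constructor
  · intro hx
    by_contra hne
    have : x ∈ s.erase a := Finset.mem_erase.2 ⟨hne, hx⟩
    rw [h2] at this
    exact absurd this (Finset.notMem_empty x)
  · rintro rfl; exact h

/-- The block of `P` containing `a`. -/
def blockOf (P : Finset (Finset α)) (a : α) : Finset α :=
  (P.filter fun b => a ∈ b).sup id

lemma filter_eq_blockOf {P : Finset (Finset α)} (hP : P ∈ parts (insert a u)) :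
    P.filter (fun b => a ∈ b) = {blockOf P a} := by
  obtain ⟨hne, hdisj, hsup⟩ := mem_parts.1 hP
  have ha : a ∈ P.sup id := by rw [hsup]; exact Finset.mem_insert_self a u
  rw [Finset.mem_sup] at ha
  obtain ⟨b, hb, hab⟩ := ha
  have hfil : P.filter (fun c => a ∈ c) = {b} := by
    apply Finset.eq_singleton_iff_unique_mem.2
    refine ⟨Finset.mem_filter.2 ⟨hb, hab⟩, ?_⟩
    intro c hc
    rw [Finset.mem_filter] at hc
    by_contra hne'
    have : a ∈ c ∩ b := Finset.mem_inter.2 ⟨hc.2, hab⟩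
    rw [hdisj c hc.1 b hb hne'] at this
    exact absurd this (Finset.notMem_empty a)
  rw [blockOf, hfil, Finset.sup_singleton, id]

lemma blockOf_mem {P : Finset (Finset α)} (hP : P ∈ parts (insert a u)) :
    blockOf P a ∈ P ∧ a ∈ blockOf P a := by
  have h := filter_eq_blockOf hP
  have : blockOf P a ∈ P.filter (fun b => a ∈ b) := by
    rw [h]; exact Finset.mem_singleton_self _
  exact ⟨(Finset.mem_filter.1 this).1, (Finset.mem_filter.1 this).2⟩

lemma not_mem_of_ne_blockOf {P : Finset (Finset α)} (hP : P ∈ parts (insert a u))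
    {b : Finset α} (hb : b ∈ P) (hne : b ≠ blockOf P a) : a ∉ b := by
  intro hab
  have : b ∈ P.filter (fun c => a ∈ c) := Finset.mem_filter.2 ⟨hb, hab⟩
  rw [filter_eq_blockOf hP] at this
  exact hne (Finset.mem_singleton.1 this)

/-- forward map: remove `a` from the partition. -/
def partErase (P : Finset (Finset α)) (a : α) :
    (_ : Finset (Finset α)) × Finset α :=
  ⟨if (blockOf P a).erase a = ∅ then P.erase (blockOf P a)
    else insert ((blockOf P a).erase a) (P.erase (blockOf P a)),
   (blockOf P a).erase a⟩

/-- inverse map: add `a` to the block `qs.2` (a new singleton if `qs.2 = ∅`). -/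
def partInsert (qs : (_ : Finset (Finset α)) × Finset α) (a : α) : Finset (Finset α) :=
  insert (insert a qs.2) (qs.1.erase qs.2)

lemma partInsert_mem (ha : a ∉ u) {Q : Finset (Finset α)} {s : Finset α}
    (hQ : Q ∈ parts u) (hs : s ∈ insert ∅ Q) :
    partInsert ⟨Q, s⟩ a ∈ parts (insert a u) := by
  obtain ⟨hne, hdisj, hsup⟩ := mem_parts.1 hQ
  have hsub : s ⊆ u := by
    rcases Finset.mem_insert.1 hs with h | h
    · simp [h]
    · exact parts_blocks_subset hQ h
  rw [mem_parts]
  refine ⟨?_, ?_, ?_⟩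
  · intro b hb
    rcases Finset.mem_insert.1 hb with rfl | hb
    · exact ⟨a, Finset.mem_insert_self a s⟩
    · exact hne b (Finset.mem_of_mem_erase hb)
  · have key : ∀ c ∈ Q.erase s, (insert a s) ∩ c = ∅ := by
      intro c hc
      have hc' := Finset.mem_of_mem_erase hc
      rw [Finset.eq_empty_iff_forall_notMem]
      intro x hx
      rw [Finset.mem_inter] at hx
      rcases Finset.mem_insert.1 hx.1 with rfl | hxs
      · exact a_not_mem_block ha hQ hc' hx.2
      · rcases Finset.mem_insert.1 hs with rfl | hsQ
        · exact absurd hxs (Finset.notMem_empty x)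
        · have hd := hdisj s hsQ c hc' (Ne.symm (Finset.ne_of_mem_erase hc))
          have hmem : x ∈ s ∩ c := Finset.mem_inter.2 ⟨hxs, hx.2⟩
          rw [hd] at hmem
          exact absurd hmem (Finset.notMem_empty x)
    intro b hb c hc hbc
    rcases Finset.mem_insert.1 hb with rfl | hb <;> rcases Finset.mem_insert.1 hc with rfl | hc
    · exact absurd rfl hbc
    · exact key c hc
    · rw [Finset.inter_comm]; exact key b hb
    · exact hdisj b (Finset.mem_of_mem_erase hb) c (Finset.mem_of_mem_erase hc) hbc
  · rw [partInsert, Finset.sup_insert]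
    rcases Finset.mem_insert.1 hs with rfl | hsQ
    · rw [Finset.erase_eq_of_notMem (empty_not_mem_parts hQ), hsup]
      show (insert a ∅) ∪ u = insert a u
      rw [Finset.insert_union, Finset.empty_union]
    · have h1 : s ⊔ (Q.erase s).sup id = u := by
        have := hsup
        rw [← Finset.insert_erase hsQ, Finset.sup_insert] at this
        exact this
      show (insert a s) ∪ (Q.erase s).sup id = insert a u
      rw [Finset.insert_union]
      rw [show s ∪ (Q.erase s).sup id = u from h1]

lemma partErase_mem (ha : a ∉ u) {P : Finset (Finset α)} (hP : P ∈ parts (insert a u)) :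
    (partErase P a).1 ∈ parts u ∧ (partErase P a).2 ∈ insert ∅ (partErase P a).1 := by
  obtain ⟨hne, hdisj, hsup⟩ := mem_parts.1 hP
  obtain ⟨hs₀P, has₀⟩ := blockOf_mem hP
  set s₀ := blockOf P a with hs₀def
  have hother : ∀ b ∈ P.erase s₀, a ∉ b := fun b hb =>
    not_mem_of_ne_blockOf hP (Finset.mem_of_mem_erase hb) (Finset.ne_of_mem_erase hb)
  have hsupP : s₀ ∪ (P.erase s₀).sup id = insert a u := by
    have := hsup
    rw [← Finset.insert_erase hs₀P, Finset.sup_insert] at this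
    exact this
  have hasup : a ∉ (P.erase s₀).sup id := by
    rw [Finset.mem_sup]
    rintro ⟨b, hb, hab⟩
    exact hother b hb hab
  have hdisj' : ∀ b ∈ P.erase s₀, ∀ c ∈ P.erase s₀, b ≠ c → b ∩ c = ∅ := by
    intro b hb c hc hbc
    exact hdisj b (Finset.mem_of_mem_erase hb) c (Finset.mem_of_mem_erase hc) hbc
  have hne' : ∀ b ∈ P.erase s₀, b.Nonempty := fun b hb => hne b (Finset.mem_of_mem_erase hb)
  by_cases ht : s₀.erase a = ∅
  · have hs₀single : s₀ = {a} := eq_singleton_of_erase_empty has₀ ht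
    have hQ : P.erase s₀ ∈ parts u := by
      rw [mem_parts]
      refine ⟨hne', hdisj', ?_⟩
      have h2 : insert a ((P.erase s₀).sup id) = insert a u := by
        rw [← hsupP, hs₀single]
        exact Finset.insert_eq a _
      exact insert_cancel hasup ha h2
    simp only [partErase, ← hs₀def, ht, if_pos rfl]
    exact ⟨hQ, Finset.mem_insert_self _ _⟩
  · have htsub : s₀.erase a ⊆ s₀ := Finset.erase_subset a s₀
    have htne : (s₀.erase a).Nonempty := Finset.nonempty_iff_ne_empty.2 ht
    have htnotin : s₀.erase a ∉ P.erase s₀ := by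
      intro h
      have hd := hdisj' (s₀.erase a) h (s₀.erase a) h
      obtain ⟨x, hx⟩ := htne
      have hxs₀ : x ∈ s₀ := htsub hx
      have hne2 : s₀.erase a ≠ s₀ := Finset.ne_of_mem_erase h
      have hd2 := hdisj (s₀.erase a) (Finset.mem_of_mem_erase h) s₀ hs₀P hne2
      have : x ∈ (s₀.erase a) ∩ s₀ := Finset.mem_inter.2 ⟨hx, hxs₀⟩
      rw [hd2] at this
      exact absurd this (Finset.notMem_empty x)
    have hQ : insert (s₀.erase a) (P.erase s₀) ∈ parts u := by
      rw [mem_parts]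
      refine ⟨?_, ?_, ?_⟩
      · intro b hb
        rcases Finset.mem_insert.1 hb with rfl | hb
        · exact htne
        · exact hne' b hb
      · have key : ∀ c ∈ P.erase s₀, (s₀.erase a) ∩ c = ∅ := by
          intro c hc
          have hd := hdisj s₀ hs₀P c (Finset.mem_of_mem_erase hc)
            (Ne.symm (Finset.ne_of_mem_erase hc))
          rw [Finset.eq_empty_iff_forall_notMem]
          intro x hx
          rw [Finset.mem_inter] at hx
          have : x ∈ s₀ ∩ c := Finset.mem_inter.2 ⟨htsub hx.1, hx.2⟩
          rw [hd] at this
          exact absurd this (Finset.notMem_empty x)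
        intro b hb c hc hbc
        rcases Finset.mem_insert.1 hb with rfl | hb <;> rcases Finset.mem_insert.1 hc with rfl | hc
        · exact absurd rfl hbc
        · exact key c hc
        · rw [Finset.inter_comm]; exact key b hb
        · exact hdisj' b hb c hc hbc
      · rw [Finset.sup_insert]
        have h2 : insert a ((s₀.erase a) ∪ (P.erase s₀).sup id) = insert a u := by
          rw [← Finset.insert_union, Finset.insert_erase has₀]
          exact hsupP
        have h3 : a ∉ (s₀.erase a) ∪ (P.erase s₀).sup id := by
          rw [Finset.mem_union]
          rintro (h | h)
          · exact (Finset.mem_erase.1 h).1 rfl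
          · exact hasup h
        exact insert_cancel h3 ha h2
    simp only [partErase, ← hs₀def, ht, if_neg ht]
    exact ⟨hQ, Finset.mem_insert_of_mem (Finset.mem_insert_self _ _)⟩

lemma partInsert_partErase (ha : a ∉ u) {P : Finset (Finset α)}
    (hP : P ∈ parts (insert a u)) : partInsert (partErase P a) a = P := by
  obtain ⟨hne, hdisj, hsup⟩ := mem_parts.1 hP
  obtain ⟨hs₀P, has₀⟩ := blockOf_mem hP
  set s₀ := blockOf P a with hs₀def
  by_cases ht : s₀.erase a = ∅
  · have hs₀single : s₀ = {a} := eq_singleton_of_erase_empty has₀ ht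
    have hemp : ∅ ∉ P.erase s₀ := by
      intro h
      simpa using hne ∅ (Finset.mem_of_mem_erase h)
    simp only [partInsert, partErase, ← hs₀def, ht, if_true]
    rw [Finset.erase_eq_of_notMem hemp]
    show insert (insert a ∅) (P.erase s₀) = P
    rw [show (insert a ∅ : Finset α) = {a} from rfl, ← hs₀single, Finset.insert_erase hs₀P]
  · have htnotin : s₀.erase a ∉ P.erase s₀ := by
      intro h
      obtain ⟨x, hx⟩ := Finset.nonempty_iff_ne_empty.2 ht
      have hne2 : s₀.erase a ≠ s₀ := Finset.ne_of_mem_erase h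
      have hd2 := hdisj (s₀.erase a) (Finset.mem_of_mem_erase h) s₀ hs₀P hne2
      have : x ∈ (s₀.erase a) ∩ s₀ := Finset.mem_inter.2 ⟨hx, Finset.erase_subset a s₀ hx⟩
      rw [hd2] at this
      exact absurd this (Finset.notMem_empty x)
    simp only [partInsert, partErase, ← hs₀def, ht, if_false]
    rw [Finset.erase_insert htnotin, Finset.insert_erase has₀, Finset.insert_erase hs₀P]

lemma blockOf_partInsert (ha : a ∉ u) {Q : Finset (Finset α)} {s : Finset α}
    (hQ : Q ∈ parts u) (hs : s ∈ insert ∅ Q) :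
    blockOf (partInsert ⟨Q, s⟩ a) a = insert a s := by
  have hP := partInsert_mem ha hQ hs
  have h1 : insert a s ∈ partInsert ⟨Q, s⟩ a := Finset.mem_insert_self _ _
  have h2 : insert a s ∈ (partInsert ⟨Q, s⟩ a).filter (fun b => a ∈ b) :=
    Finset.mem_filter.2 ⟨h1, Finset.mem_insert_self a s⟩
  rw [filter_eq_blockOf hP] at h2
  exact (Finset.mem_singleton.1 h2).symm

lemma partErase_partInsert (ha : a ∉ u) {Q : Finset (Finset α)} {s : Finset α}
    (hQ : Q ∈ parts u) (hs : s ∈ insert ∅ Q) :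
    partErase (partInsert ⟨Q, s⟩ a) a = ⟨Q, s⟩ := by
  have hblock := blockOf_partInsert ha hQ hs
  have hanots : a ∉ s := by
    rcases Finset.mem_insert.1 hs with rfl | h
    · exact Finset.notMem_empty a
    · exact a_not_mem_block ha hQ h
  have herase : (insert a s).erase a = s := Finset.erase_insert hanots
  have hPE : (partInsert ⟨Q, s⟩ a).erase (insert a s) = Q.erase s := by
    apply Finset.erase_insert
    intro hmem
    exact a_not_mem_block ha hQ (Finset.mem_of_mem_erase hmem) (Finset.mem_insert_self a s)
  rcases Finset.mem_insert.1 hs with rfl | hsQ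
  · simp only [partErase, hblock, herase, hPE]
    simp [Finset.erase_eq_of_notMem (empty_not_mem_parts hQ)]
  · have hsne : s ≠ ∅ := Finset.nonempty_iff_ne_empty.1 ((mem_parts.1 hQ).1 s hsQ)
    simp only [partErase, hblock, herase, if_neg hsne, hPE]
    rw [Finset.insert_erase hsQ]

lemma partInsert_card_empty (ha : a ∉ u) {Q : Finset (Finset α)} (hQ : Q ∈ parts u) :
    (partInsert ⟨Q, (∅ : Finset α)⟩ a).card = Q.card + 1 := by
  show (insert (insert a ∅) (Q.erase ∅)).card = Q.card + 1
  rw [Finset.erase_eq_of_notMem (empty_not_mem_parts hQ)]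
  rw [Finset.card_insert_of_notMem]
  intro h
  exact a_not_mem_block ha hQ h (Finset.mem_insert_self a ∅)

lemma partInsert_card_mem (ha : a ∉ u) {Q : Finset (Finset α)} {s : Finset α}
    (hQ : Q ∈ parts u) (hs : s ∈ Q) :
    (partInsert ⟨Q, s⟩ a).card = Q.card := by
  show (insert (insert a s) (Q.erase s)).card = Q.card
  rw [Finset.card_insert_of_notMem, Finset.card_erase_of_mem hs,
    Nat.sub_add_cancel (Nat.one_le_iff_ne_zero.2 (Finset.card_ne_zero_of_mem hs))]
  intro h
  exact a_not_mem_block ha hQ (Finset.mem_of_mem_erase h) (Finset.mem_insert_self a s)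

lemma key_sum (w : ℕ → ℤ) (ha : a ∉ u) :
    ∑ P ∈ parts (insert a u), w P.card
      = ∑ Q ∈ parts u, (w (Q.card + 1) + (Q.card : ℤ) * w Q.card) := by
  have hmain : ∑ P ∈ parts (insert a u), w P.card
      = ∑ qs ∈ (parts u).sigma (fun Q => insert ∅ Q), w ((partInsert qs a).card) := by
    refine Finset.sum_nbij' (fun P => partErase P a) (fun qs => partInsert qs a) ?_ ?_ ?_ ?_ ?_
    · intro P hP
      rw [Finset.mem_sigma]
      exact ⟨(partErase_mem ha hP).1, (partErase_mem ha hP).2⟩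
    · intro qs hqs
      rw [Finset.mem_sigma] at hqs
      obtain ⟨Q, s⟩ := qs
      exact partInsert_mem ha hqs.1 hqs.2
    · intro P hP
      exact partInsert_partErase ha hP
    · intro qs hqs
      rw [Finset.mem_sigma] at hqs
      obtain ⟨Q, s⟩ := qs
      exact partErase_partInsert ha hqs.1 hqs.2
    · intro P hP
      rw [partInsert_partErase ha hP]
  rw [hmain, Finset.sum_sigma]
  refine Finset.sum_congr rfl ?_
  intro Q hQ
  rw [Finset.sum_insert (empty_not_mem_parts hQ)]
  congr 1
  · rw [partInsert_card_empty ha hQ]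
  · rw [Finset.sum_congr rfl (fun s hs => by rw [partInsert_card_mem ha hQ hs]),
      Finset.sum_const, nsmul_eq_mul]

lemma parts_nonempty_card {Q : Finset (Finset α)} (hu : u.Nonempty) (hQ : Q ∈ parts u) :
    1 ≤ Q.card := by
  rw [Nat.one_le_iff_ne_zero, Ne, Finset.card_eq_zero]
  rintro rfl
  have := (mem_parts.1 hQ).2.2
  rw [Finset.sup_empty] at this
  rw [← this] at hu
  exact Finset.not_nonempty_empty hu

/-- The alternating-factorial weighted sum over partitions vanishes. -/
lemma weight_sum_zero (hu : u.Nonempty) (ha : a ∉ u) :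
    ∑ P ∈ parts (insert a u),
      ((-1 : ℤ) ^ (P.card - 1) * ((P.card - 1).factorial : ℤ)) = 0 := by
  rw [key_sum (fun k => (-1 : ℤ) ^ (k - 1) * ((k - 1).factorial : ℤ)) ha]
  apply Finset.sum_eq_zero
  intro Q hQ
  obtain ⟨k, hk⟩ : ∃ k, Q.card = k + 1 :=
    ⟨Q.card - 1, (Nat.succ_pred_eq_of_pos (parts_nonempty_card hu hQ)).symm⟩
  rw [hk]
  simp only [Nat.add_sub_cancel]
  push_cast [Nat.factorial_succ]
  ring

end Parts

/-- a unital linear map `f : A → B` is an algebra homomorphism if and only if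
all its higher cumulants `κ(f)_n`, `n ≥ 2`, vanish identically. -/
theorem algHom_iff_cumulants_vanish (K A B : Type*) [Field K] [CharZero K]
    [CommRing A] [Algebra K A] [CommRing B] [Algebra K B]
    (f : A →ₗ[K] B) (hf : f 1 = 1) :
    (∀ a b : A, f (a * b) = f a * f b) ↔
      (∀ n : ℕ, 2 ≤ n → ∀ a : Fin n → A, cumul (⇑f) n a = 0) := by
  constructor
  · intro hmul n hn a
    have hprod : ∀ s : Finset (Fin n), f (∏ i ∈ s, a i) = ∏ i ∈ s, f (a i) := by
      intro s
      induction s using Finset.induction_on with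
      | empty => simpa using hf
      | insert x s hx ih =>
        rw [Finset.prod_insert hx, Finset.prod_insert hx, hmul, ih]
    have hC : ∀ P ∈ partitionsOf n,
        ∏ s ∈ P, f (∏ i ∈ s, a i) = ∏ i : Fin n, f (a i) := by
      intro P hP
      rw [partitionsOf_eq] at hP
      obtain ⟨hne, hdisj, hsup⟩ := mem_parts.1 hP
      have hpd : (↑P : Set (Finset (Fin n))).PairwiseDisjoint id := by
        intro b hb c hc hbc
        rw [Finset.mem_coe] at hb hc
        exact Finset.disjoint_iff_inter_eq_empty.2 (hdisj b hb c hc hbc)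
      calc ∏ s ∈ P, f (∏ i ∈ s, a i) = ∏ s ∈ P, ∏ i ∈ s, f (a i) :=
            Finset.prod_congr rfl (fun s _ => hprod s)
        _ = ∏ i ∈ P.biUnion id, f (a i) := (Finset.prod_biUnion hpd).symm
        _ = ∏ i : Fin n, f (a i) := by
            rw [← Finset.sup_eq_biUnion, hsup]
    rw [cumul, Finset.sum_congr rfl (fun P hP => by rw [hC P hP]), ← Finset.sum_smul]
    have hwz : ∑ P ∈ partitionsOf n,
        ((-1 : ℤ) ^ (P.card - 1) * ((P.card - 1).factorial : ℤ)) = 0 := by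
      rw [partitionsOf_eq]
      have huniv : (Finset.univ : Finset (Fin n))
          = insert ⟨0, by omega⟩ ((Finset.univ : Finset (Fin n)).erase ⟨0, by omega⟩) :=
        (Finset.insert_erase (Finset.mem_univ _)).symm
      rw [huniv]
      apply weight_sum_zero
      · exact ⟨⟨1, by omega⟩, Finset.mem_erase.2 ⟨by simp [Fin.ext_iff], Finset.mem_univ _⟩⟩
      · exact Finset.notMem_erase _ _
    rw [hwz, zero_smul]
  · intro h x y
    have h2 := h 2 le_rfl ![x, y]
    have hpart : partitionsOf 2 = {{Finset.univ}, {{0}, {1}}} := by decide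
    rw [cumul, hpart] at h2
    have hne : ({Finset.univ} : Finset (Finset (Fin 2))) ≠ {{0}, {1}} := by decide
    rw [Finset.sum_pair hne] at h2
    simp only [Finset.card_singleton, Finset.prod_singleton] at h2
    rw [Finset.card_pair (by decide : ({0} : Finset (Fin 2)) ≠ {1})] at h2
    rw [Finset.prod_pair (by decide : ({0} : Finset (Fin 2)) ≠ {1})] at h2
    simp only [Finset.prod_singleton] at h2
    have huniv2 : ∏ i ∈ (Finset.univ : Finset (Fin 2)), (![x, y]) i = x * y := by
      rw [Fin.prod_univ_two]; rfl
    rw [huniv2] at h2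
    norm_num at h2
    linear_combination h2
end

section
/- Let Δ : A → A be a K-linear endomorphism with Δ(1)=0 of a commutative unital K-algebra A, and let k ≥ 1. If the Koszul bracket K(Δ)_{k+1} vanishes identically, then K(Δ)_n vanishes identically for every n ≥ k+1 (i.e. Δ is a differential operator of order ≤ k). -/
open Finset

/-- The `n`-th Koszul bracket of an operator `D` on a commutative ring. -/
noncomputable def koszul {R : Type*} [CommRing R] (D : R → R) (n : ℕ) (a : Fin n → R) : R :=
  ∑ s ∈ (Finset.univ : Finset (Fin n)).powerset.filter fun s => s.Nonempty,
    (-1 : ℤ) ^ (n - s.card) • (D (∏ i ∈ s, a i) * ∏ i ∈ sᶜ, a i)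

/-- The auxiliary "twisted" Koszul sum `G_n(a; b) = Σ_{S⊆[n]} (−1)^{n−|S|} D(b∏_S a)∏_{S^c} a`. -/
noncomputable def Gk {R : Type*} [CommRing R] (D : R → R) (n : ℕ) (a : Fin n → R) (b : R) : R :=
  ∑ s ∈ (Finset.univ : Finset (Fin n)).powerset,
    (-1 : ℤ) ^ (n - s.card) • (D (b * ∏ i ∈ s, a i) * ∏ i ∈ sᶜ, a i)

lemma koszul_eq_Gk {R : Type*} [CommRing R] (D : R → R) (hD : D 1 = 0) (n : ℕ)
    (a : Fin n → R) : koszul D n a = Gk D n a 1 := by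
  classical
  unfold koszul Gk
  rw [eq_comm, ← Finset.sum_filter_add_sum_filter_not
    ((Finset.univ : Finset (Fin n)).powerset) (fun s => s.Nonempty)]
  have h0 : (Finset.univ : Finset (Fin n)).powerset.filter (fun s => ¬ s.Nonempty) = {∅} := by
    ext s
    simp [Finset.nonempty_iff_ne_empty]
  rw [h0, Finset.sum_singleton]
  simp [hD]

lemma my_powerset_map {α β : Type*} (f : α ↪ β) (s : Finset α) :
    (s.map f).powerset = s.powerset.map
      ⟨fun u => u.map f, Finset.map_injective f⟩ := by
  ext t
  simp only [Finset.mem_powerset, Finset.mem_map, Function.Embedding.coeFn_mk,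
    Finset.subset_map_iff]
  aesop

lemma my_castSucc_ne_last {n : ℕ} (j : Fin n) : Fin.castSucc j ≠ Fin.last n :=
  (Fin.castSucc_lt_last j).ne

lemma my_castLE_eq_castSucc {n : ℕ} (h : n ≤ n + 1) (x : Fin n) :
    Fin.castLE h x = Fin.castSucc x := rfl

lemma compl_map_castSucc {n : ℕ} (u : Finset (Fin n)) :
    (u.map Fin.castSuccEmb)ᶜ = insert (Fin.last n) ((uᶜ).map Fin.castSuccEmb) := by
  ext i
  rcases Fin.eq_castSucc_or_eq_last i with ⟨j, rfl⟩ | rfl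
  · simp [my_castLE_eq_castSucc, my_castSucc_ne_last, (Fin.castSucc_injective n).eq_iff]
  · simp [my_castLE_eq_castSucc, my_castSucc_ne_last]

lemma compl_insert_last {n : ℕ} (u : Finset (Fin n)) :
    (insert (Fin.last n) (u.map Fin.castSuccEmb))ᶜ = (uᶜ).map Fin.castSuccEmb := by
  ext i
  rcases Fin.eq_castSucc_or_eq_last i with ⟨j, rfl⟩ | rfl
  · simp [my_castLE_eq_castSucc, my_castSucc_ne_last, (Fin.castSucc_injective n).eq_iff]
  · simp [my_castLE_eq_castSucc, my_castSucc_ne_last]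

lemma last_not_mem_map {n : ℕ} (u : Finset (Fin n)) :
    Fin.last n ∉ u.map Fin.castSuccEmb := by
  simp [my_castLE_eq_castSucc, my_castSucc_ne_last]

/-- The key recursion for `Gk`. -/
lemma Gk_succ {R : Type*} [CommRing R] (D : R → R) (n : ℕ) (a : Fin (n + 1) → R) (b : R) :
    Gk D (n + 1) a b =
      Gk D n (a ∘ Fin.castSucc) (a (Fin.last n) * b)
        - a (Fin.last n) * Gk D n (a ∘ Fin.castSucc) b := by
  classical
  have huniv : (Finset.univ : Finset (Fin (n + 1))) =
      insert (Fin.last n) ((Finset.univ : Finset (Fin n)).map Fin.castSuccEmb) := by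
    rw [Fin.univ_castSuccEmb]; simp [Finset.cons_eq_insert]
  unfold Gk
  rw [huniv, Finset.sum_powerset_insert (last_not_mem_map _), my_powerset_map,
    Finset.sum_map, Finset.sum_map]
  simp only [Function.Embedding.coeFn_mk]
  have h1 : ∀ u ∈ (Finset.univ : Finset (Fin n)).powerset,
      (-1 : ℤ) ^ (n + 1 - (u.map Fin.castSuccEmb).card) •
        (D (b * ∏ i ∈ u.map Fin.castSuccEmb, a i) * ∏ i ∈ (u.map Fin.castSuccEmb)ᶜ, a i) =
      -(a (Fin.last n) * ((-1 : ℤ) ^ (n - u.card) •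
        (D (b * ∏ i ∈ u, (a ∘ Fin.castSucc) i) * ∏ i ∈ uᶜ, (a ∘ Fin.castSucc) i))) := by
    intro u hu
    have hcard : u.card ≤ n := by
      simpa using Finset.card_le_card (Finset.mem_powerset.mp hu)
    have hexp : n + 1 - (u.map Fin.castSuccEmb).card = (n - u.card) + 1 := by
      rw [Finset.card_map]; omega
    rw [hexp, compl_map_castSucc, Finset.prod_insert (last_not_mem_map _), Finset.prod_map,
      Finset.prod_map]
    simp only [Fin.coe_castSuccEmb, pow_succ, Function.comp]
    push_cast [zsmul_eq_mul]
    ring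
  have h2 : ∀ u ∈ (Finset.univ : Finset (Fin n)).powerset,
      (-1 : ℤ) ^ (n + 1 - (insert (Fin.last n) (u.map Fin.castSuccEmb)).card) •
        (D (b * ∏ i ∈ insert (Fin.last n) (u.map Fin.castSuccEmb), a i) *
          ∏ i ∈ (insert (Fin.last n) (u.map Fin.castSuccEmb))ᶜ, a i) =
      (-1 : ℤ) ^ (n - u.card) •
        (D ((a (Fin.last n) * b) * ∏ i ∈ u, (a ∘ Fin.castSucc) i) *
          ∏ i ∈ uᶜ, (a ∘ Fin.castSucc) i) := by
    intro u hu
    rw [Finset.card_insert_of_notMem (last_not_mem_map u), Finset.card_map,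
      Finset.prod_insert (last_not_mem_map u), compl_insert_last, Finset.prod_map,
      Finset.prod_map]
    simp only [Fin.coe_castSuccEmb, Function.comp]
    congr 2
    · omega
    · congr 1
      ring
  rw [Finset.sum_congr rfl h1, Finset.sum_congr rfl h2, Finset.sum_neg_distrib,
    ← Finset.mul_sum]
  ring

/-- if `K(Δ)_{k+1}` vanishes identically (with `k ≥ 1`) then `K(Δ)_n`
vanishes identically for every `n ≥ k+1`, i.e. `Δ` is a differential operator of
order ≤ k. -/
theorem koszul_vanishing_upward (K A : Type*) [Field K] [CharZero K]
    [CommRing A] [Algebra K A] (Δ : A →ₗ[K] A) (hΔ : Δ 1 = 0) (k : ℕ) (hk : 1 ≤ k)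
    (hvan : ∀ a : Fin (k + 1) → A, koszul (⇑Δ) (k + 1) a = 0) :
    ∀ n : ℕ, k + 1 ≤ n → ∀ a : Fin n → A, koszul (⇑Δ) n a = 0 := by
  have hmul : ∀ (c : Fin k → A) (x : A), Gk (⇑Δ) k c x = x * Gk (⇑Δ) k c 1 := by
    intro c x
    have h := Gk_succ (⇑Δ) k (Fin.snoc c x) 1
    have hc : (Fin.snoc c x : Fin (k+1) → A) ∘ Fin.castSucc = c := by
      funext i; simp
    have hl : (Fin.snoc c x : Fin (k+1) → A) (Fin.last k) = x := by simp
    rw [hc, hl, ← koszul_eq_Gk (⇑Δ) hΔ, hvan, mul_one] at h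
    exact sub_eq_zero.mp h.symm
  have hGzero : ∀ (a : Fin (k + 1) → A) (b : A), Gk (⇑Δ) (k + 1) a b = 0 := by
    intro a b
    rw [Gk_succ, hmul _ (a (Fin.last k) * b), hmul _ b]
    ring
  have hup : ∀ n : ℕ, k + 1 ≤ n → ∀ (a : Fin n → A) (b : A), Gk (⇑Δ) n a b = 0 := by
    intro n hn
    induction n, hn using Nat.le_induction with
    | base => exact hGzero
    | succ m hm ih =>
      intro a b
      rw [Gk_succ, ih, ih]
      ring
  intro n hn a
  rw [koszul_eq_Gk (⇑Δ) hΔ, hup n hn]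
end

section
/- Let Δ, Δ′ : A → A be K-linear endomorphisms with Δ(1)=Δ′(1)=0 of a commutative unital K-algebra A. Then for every n ≥ 1 and all a_1,…,a_n ∈ A: K(Δ∘Δ′ − Δ′∘Δ)_n(a_1,…,a_n) = Σ_{i=1}^{n} Σ_{S⊆{1,…,n}, |S|=i} [ K(Δ)_{n−i+1}(K(Δ′)_i((a_s)_{s∈S}), (a_j)_{j∉S}) − K(Δ′)_{n−i+1}(K(Δ)_i((a_s)_{s∈S}), (a_j)_{j∉S}) ]. (This is the Taylor-coefficient form of the statement that Δ ↦ K(Δ) is a morphism of Lie algebras from endomorphisms vanishing on 1, with the commutator bracket, to coderivations of the symmetric coalgebra, with the commutator bracket.) -/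
open Finset

section Aux

variable {A : Type*} [CommRing A]


/-- Generalized Koszul sum over an arbitrary finite index set (including the empty subset). -/
noncomputable def kos {α : Type*} [DecidableEq α] (D : A → A) (s : Finset α) (a : α → A) : A :=
  ∑ t ∈ s.powerset, (-1 : ℤ) ^ (s.card - t.card) • (D (∏ i ∈ t, a i) * ∏ i ∈ s \ t, a i)

lemma npow_neg_one_sub {a b : ℕ} (h : b ≤ a) : (-1 : ℤ) ^ (a - b) = (-1) ^ a * (-1) ^ b := by
  have key : ∀ k : ℕ, (-1 : ℤ) ^ k = if Even k then 1 else -1 := by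
    intro k
    rcases Nat.even_or_odd k with hk | hk
    · rw [hk.neg_one_pow, if_pos hk]
    · rw [hk.neg_one_pow, if_neg (Nat.not_even_iff_odd.mpr hk)]
  rw [key, key, key, if_congr (Nat.even_sub h) rfl rfl]
  by_cases ha : Even a <;> by_cases hb : Even b <;> simp [ha, hb]

lemma sq_neg_one_pow (x : ℕ) : (-1 : ℤ) ^ x * (-1) ^ x = 1 := by
  rw [← mul_pow]; norm_num

lemma sum_powerset_map' {α β M : Type*} [AddCommMonoid M] (f : α ↪ β) (u : Finset α)
    (F : Finset β → M) :
    ∑ t ∈ (u.map f).powerset, F t = ∑ t ∈ u.powerset, F (t.map f) := by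
  refine (Finset.sum_bij (fun t _ => t.map f) ?_ ?_ ?_ ?_).symm
  · intro t ht
    exact mem_powerset.mpr (map_subset_map.mpr (mem_powerset.mp ht))
  · intro t₁ h₁ t₂ h₂ h
    exact Finset.map_injective f h
  · intro v hv
    obtain ⟨t, ht, rfl⟩ := Finset.subset_map_iff.mp (mem_powerset.mp hv)
    exact ⟨t, mem_powerset.mpr ht, rfl⟩
  · intro t ht; rfl

lemma fmap_sdiff {α β : Type*} [DecidableEq α] [DecidableEq β] (f : α ↪ β) (s t : Finset α) :
    (s \ t).map f = s.map f \ t.map f := by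
  ext b
  simp only [mem_map, mem_sdiff]
  constructor
  · rintro ⟨x, ⟨hxs, hxt⟩, rfl⟩
    exact ⟨⟨x, hxs, rfl⟩, fun ⟨y, hy, hyb⟩ => hxt (f.injective hyb ▸ hy)⟩
  · rintro ⟨⟨x, hxs, rfl⟩, hb⟩
    exact ⟨x, ⟨hxs, fun hxt => hb ⟨x, hxt, rfl⟩⟩, rfl⟩

lemma kos_map {α β : Type*} [DecidableEq α] [DecidableEq β] (D : A → A) (f : β ↪ α)
    (u : Finset β) (a : α → A) :
    kos D (u.map f) a = kos D u (fun i => a (f i)) := by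
  unfold kos
  rw [sum_powerset_map']
  refine Finset.sum_congr rfl fun t ht => ?_
  rw [card_map, card_map, ← fmap_sdiff, prod_map, prod_map]

/-- `koszul` equals the generalized sum over the full powerset when `D 1 = 0`. -/
lemma koszul_eq_kos {n : ℕ} (D : A → A) (hD : D 1 = 0) (a : Fin n → A) :
    koszul D n a = kos D Finset.univ a := by
  unfold koszul kos
  rw [← Finset.sum_filter_add_sum_filter_not (univ : Finset (Fin n)).powerset
    (fun s => s.Nonempty)]
  have h2 : ∑ s ∈ (univ : Finset (Fin n)).powerset.filter (fun s => ¬ s.Nonempty),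
      (-1 : ℤ) ^ ((univ : Finset (Fin n)).card - s.card) •
        (D (∏ i ∈ s, a i) * ∏ i ∈ univ \ s, a i) = 0 := by
    refine Finset.sum_eq_zero fun s hs => ?_
    have : s = ∅ := not_nonempty_iff_eq_empty.mp (mem_filter.mp hs).2
    subst this
    simp [hD]
  rw [h2, add_zero]
  refine Finset.sum_congr rfl fun s hs => ?_
  rw [card_univ, Fintype.card_fin, compl_eq_univ_sdiff]

/-- The canonical embedding of `Fin s.card` into the ambient type. -/
noncomputable def emb {α : Type*} (s : Finset α) : Fin s.card ↪ α :=
  ⟨fun i => (s.equivFin.symm i).1, fun i j h => s.equivFin.symm.injective (Subtype.ext h)⟩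

lemma univ_map_emb {α : Type*} [DecidableEq α] (s : Finset α) :
    Finset.univ.map (emb s) = s := by
  ext x
  simp only [mem_map, mem_univ, true_and, emb, Function.Embedding.coeFn_mk]
  constructor
  · rintro ⟨i, rfl⟩
    exact (s.equivFin.symm i).2
  · intro hx
    exact ⟨s.equivFin ⟨x, hx⟩, congrArg Subtype.val (s.equivFin.symm_apply_apply ⟨x, hx⟩)⟩

lemma restr_eq_emb {α : Type*} (a : α → A) (s : Finset α) :
    restr a s = fun i => a (emb s i) := rfl

/-- Transport sums over the powerset of `Fin s.card` to sums over the powerset of `s`. -/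
lemma sum_powerset_restr {n : ℕ} (s : Finset (Fin n)) (G : ℕ → A → A → A) (a : Fin n → A) :
    ∑ t ∈ (univ : Finset (Fin s.card)).powerset,
        G t.card (∏ i ∈ t, restr a s i) (∏ i ∈ univ \ t, restr a s i)
      = ∑ t ∈ s.powerset, G t.card (∏ i ∈ t, a i) (∏ i ∈ s \ t, a i) := by
  conv_rhs => rw [← univ_map_emb s]
  rw [sum_powerset_map']
  refine Finset.sum_congr rfl fun t ht => ?_
  rw [card_map, ← fmap_sdiff, prod_map, prod_map]
  rfl

lemma kos_restr {n : ℕ} (D : A → A) (hD : D 1 = 0) (s : Finset (Fin n)) (a : Fin n → A) :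
    koszul D s.card (restr a s) = kos D s a := by
  rw [koszul_eq_kos D hD]
  unfold kos
  have := sum_powerset_restr s
    (fun k x y => (-1 : ℤ) ^ (s.card - k) • (D x * y)) a
  simp only [card_univ, Fintype.card_fin]
  exact this

lemma univ_fin_succ (m : ℕ) : (univ : Finset (Fin (m+1))) =
    insert 0 ((univ : Finset (Fin m)).map ⟨Fin.succ, Fin.succ_injective m⟩) := by
  rw [Fin.univ_succ, Finset.cons_eq_insert]

lemma zero_not_mem_map_succ (m : ℕ) (t : Finset (Fin m)) :
    (0 : Fin (m+1)) ∉ t.map ⟨Fin.succ, Fin.succ_injective m⟩ := by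
  simp only [mem_map, Function.Embedding.coeFn_mk]
  rintro ⟨i, _, h⟩
  exact Fin.succ_ne_zero i h

lemma sdiff_map_succ₁ (m : ℕ) (t : Finset (Fin m)) :
    insert 0 ((univ : Finset (Fin m)).map ⟨Fin.succ, Fin.succ_injective m⟩) \
      (t.map ⟨Fin.succ, Fin.succ_injective m⟩)
    = insert 0 (((univ : Finset (Fin m)) \ t).map ⟨Fin.succ, Fin.succ_injective m⟩) := by
  ext x
  simp only [mem_sdiff, mem_insert, mem_map, Function.Embedding.coeFn_mk, mem_univ, true_and]
  constructor
  · rintro ⟨h0 | ⟨i, rfl⟩, ht⟩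
    · exact Or.inl h0
    · exact Or.inr ⟨i, fun hit => ht ⟨i, hit, rfl⟩, rfl⟩
  · rintro (rfl | ⟨i, hit, rfl⟩)
    · refine ⟨Or.inl rfl, ?_⟩
      rintro ⟨i, _, h⟩
      exact Fin.succ_ne_zero i h
    · refine ⟨Or.inr ⟨i, rfl⟩, ?_⟩
      rintro ⟨j, hjt, hj⟩
      exact hit (Fin.succ_injective m hj ▸ hjt)

lemma sdiff_map_succ₂ (m : ℕ) (t : Finset (Fin m)) :
    insert 0 ((univ : Finset (Fin m)).map ⟨Fin.succ, Fin.succ_injective m⟩) \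
      (insert 0 (t.map ⟨Fin.succ, Fin.succ_injective m⟩))
    = ((univ : Finset (Fin m)) \ t).map ⟨Fin.succ, Fin.succ_injective m⟩ := by
  ext x
  simp only [mem_sdiff, mem_insert, mem_map, Function.Embedding.coeFn_mk, mem_univ, true_and]
  constructor
  · rintro ⟨h0 | ⟨i, rfl⟩, ht⟩
    · exact absurd (Or.inl h0) ht
    · push_neg at ht
      exact ⟨i, fun hit => (ht.2 i hit) rfl, rfl⟩
  · rintro ⟨i, hit, rfl⟩
    refine ⟨Or.inr ⟨i, rfl⟩, ?_⟩
    rintro (h | ⟨j, hjt, hj⟩)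
    · exact Fin.succ_ne_zero i h
    · exact hit (Fin.succ_injective m hj ▸ hjt)

lemma koszul_cons (D : A → A) (hD : D 1 = 0) {m : ℕ} (b : A) (c : Fin m → A) :
    koszul D (m + 1) (Fin.cons b c) =
      (∑ t ∈ (univ : Finset (Fin m)).powerset,
          (-1 : ℤ) ^ (m - t.card) • (D (b * ∏ i ∈ t, c i) * ∏ i ∈ univ \ t, c i))
        - ∑ t ∈ (univ : Finset (Fin m)).powerset,
          (-1 : ℤ) ^ (m - t.card) • (D (∏ i ∈ t, c i) * (b * ∏ i ∈ univ \ t, c i)) := by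
  rw [koszul_eq_kos D hD]
  unfold kos
  rw [univ_fin_succ m,
    Finset.sum_powerset_insert (zero_not_mem_map_succ m univ), sum_powerset_map',
    sum_powerset_map']
  have hcard : (insert (0 : Fin (m+1))
      ((univ : Finset (Fin m)).map ⟨Fin.succ, Fin.succ_injective m⟩)).card = m + 1 := by
    rw [card_insert_of_notMem (zero_not_mem_map_succ m univ), card_map, card_univ,
      Fintype.card_fin]
  have h1 : ∀ t ∈ (univ : Finset (Fin m)).powerset,
      (-1 : ℤ) ^ ((insert (0 : Fin (m+1))
          ((univ : Finset (Fin m)).map ⟨Fin.succ, Fin.succ_injective m⟩)).card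
          - (t.map ⟨Fin.succ, Fin.succ_injective m⟩).card) •
        (D (∏ i ∈ t.map ⟨Fin.succ, Fin.succ_injective m⟩, (Fin.cons b c : Fin (m+1) → A) i) *
          ∏ i ∈ insert (0 : Fin (m+1))
            ((univ : Finset (Fin m)).map ⟨Fin.succ, Fin.succ_injective m⟩) \
              t.map ⟨Fin.succ, Fin.succ_injective m⟩, (Fin.cons b c : Fin (m+1) → A) i)
      = -((-1 : ℤ) ^ (m - t.card) • (D (∏ i ∈ t, c i) * (b * ∏ i ∈ univ \ t, c i))) := by
    intro t ht
    have htc : t.card ≤ m := by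
      simpa [card_univ] using card_le_card (mem_powerset.mp ht)
    rw [hcard, card_map, sdiff_map_succ₁ m t,
      prod_insert (zero_not_mem_map_succ m _), prod_map, prod_map]
    simp only [Function.Embedding.coeFn_mk, Fin.cons_succ, Fin.cons_zero]
    rw [show m + 1 - t.card = (m - t.card) + 1 by omega, pow_succ]
    rw [mul_neg_one, neg_smul]
  have h2 : ∀ t ∈ (univ : Finset (Fin m)).powerset,
      (-1 : ℤ) ^ ((insert (0 : Fin (m+1))
          ((univ : Finset (Fin m)).map ⟨Fin.succ, Fin.succ_injective m⟩)).card
          - (insert (0 : Fin (m+1)) (t.map ⟨Fin.succ, Fin.succ_injective m⟩)).card) •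
        (D (∏ i ∈ insert (0 : Fin (m+1)) (t.map ⟨Fin.succ, Fin.succ_injective m⟩),
            (Fin.cons b c : Fin (m+1) → A) i) *
          ∏ i ∈ insert (0 : Fin (m+1))
            ((univ : Finset (Fin m)).map ⟨Fin.succ, Fin.succ_injective m⟩) \
              insert (0 : Fin (m+1)) (t.map ⟨Fin.succ, Fin.succ_injective m⟩), (Fin.cons b c : Fin (m+1) → A) i)
      = (-1 : ℤ) ^ (m - t.card) • (D (b * ∏ i ∈ t, c i) * ∏ i ∈ univ \ t, c i) := by
    intro t ht
    rw [hcard, card_insert_of_notMem (zero_not_mem_map_succ m t), card_map,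
      sdiff_map_succ₂ m t, prod_insert (zero_not_mem_map_succ m t), prod_map, prod_map]
    simp only [Function.Embedding.coeFn_mk, Fin.cons_succ, Fin.cons_zero]
    rw [Nat.succ_sub_succ]
  rw [Finset.sum_congr rfl h1, Finset.sum_congr rfl h2, Finset.sum_neg_distrib]
  ring

lemma koszul_cons_restr {n : ℕ} (D : A → A) (hD : D 1 = 0) (s : Finset (Fin n)) (b : A)
    (a : Fin n → A) :
    koszul D (sᶜ.card + 1) (Fin.cons b (restr a sᶜ)) =
      (∑ t ∈ sᶜ.powerset, (-1 : ℤ) ^ (sᶜ.card - t.card) •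
          (D (b * ∏ i ∈ t, a i) * ∏ i ∈ sᶜ \ t, a i))
        - ∑ t ∈ sᶜ.powerset, (-1 : ℤ) ^ (sᶜ.card - t.card) •
          (D (∏ i ∈ t, a i) * (b * ∏ i ∈ sᶜ \ t, a i)) := by
  rw [koszul_cons D hD b (restr a sᶜ),
    sum_powerset_restr sᶜ (fun k x y => (-1 : ℤ) ^ (sᶜ.card - k) • (D (b * x) * y)) a,
    sum_powerset_restr sᶜ (fun k x y => (-1 : ℤ) ^ (sᶜ.card - k) • (D x * (b * y))) a]

/-- The "main" part of the expansion. -/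
noncomputable def Pf {α : Type*} [Fintype α] [DecidableEq α] (D D' : A → A) (s : Finset α)
    (a : α → A) : A :=
  ∑ U ∈ sᶜ.powerset, (-1 : ℤ) ^ (sᶜ.card - U.card) •
    (D (kos D' s a * ∏ i ∈ U, a i) * ∏ i ∈ sᶜ \ U, a i)

/-- The "cross" part of the expansion. -/
noncomputable def Qf {α : Type*} [Fintype α] [DecidableEq α] (D D' : A → A) (s : Finset α)
    (a : α → A) : A :=
  ∑ U ∈ sᶜ.powerset, (-1 : ℤ) ^ (sᶜ.card - U.card) •
    (D (∏ i ∈ U, a i) * (kos D' s a * ∏ i ∈ sᶜ \ U, a i))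

lemma Q_expand {α : Type*} [Fintype α] [DecidableEq α] (D D' : A → A) (s : Finset α)
    (a : α → A) :
    Qf D D' s a = ∑ U ∈ sᶜ.powerset, ∑ T ∈ s.powerset,
      ((-1 : ℤ) ^ (sᶜ.card - U.card) * (-1 : ℤ) ^ (s.card - T.card)) •
        (D (∏ i ∈ U, a i) * ((D' (∏ i ∈ T, a i) * ∏ i ∈ s \ T, a i) * ∏ i ∈ sᶜ \ U, a i)) := by
  unfold Qf kos
  refine Finset.sum_congr rfl fun U hU => ?_
  rw [sum_mul, mul_sum, smul_sum]
  refine Finset.sum_congr rfl fun T hT => ?_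
  rw [smul_mul_assoc, mul_smul_comm, smul_smul]

lemma P_expand {α R : Type*} [Fintype α] [DecidableEq α] [Semiring R] [Module R A]
    (E : A →ₗ[R] A) (D' : A → A) (s : Finset α) (a : α → A) :
    Pf ⇑E D' s a = ∑ U ∈ sᶜ.powerset, ∑ T ∈ s.powerset,
      ((-1 : ℤ) ^ (sᶜ.card - U.card) * (-1 : ℤ) ^ (s.card - T.card)) •
        (E (D' (∏ i ∈ T, a i) * ((∏ i ∈ s \ T, a i) * ∏ i ∈ U, a i)) * ∏ i ∈ sᶜ \ U, a i) := by
  unfold Pf kos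
  refine Finset.sum_congr rfl fun U hU => ?_
  rw [sum_mul]
  simp only [smul_mul_assoc]
  rw [map_sum]
  simp only [map_zsmul]
  rw [sum_mul, smul_sum]
  refine Finset.sum_congr rfl fun T hT => ?_
  rw [smul_mul_assoc, smul_smul, mul_assoc (D' (∏ i ∈ T, a i))]

lemma sum_powerset_pair {M α : Type*} [AddCommMonoid M] [Fintype α] [DecidableEq α]
    (F : Finset α → Finset α → M) :
    ∑ S ∈ (univ : Finset α).powerset, ∑ T ∈ S.powerset, F S T
      = ∑ T ∈ (univ : Finset α).powerset, ∑ X ∈ Tᶜ.powerset, F (T ∪ X) T := by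
  rw [Finset.sum_sigma', Finset.sum_sigma']
  refine Finset.sum_nbij' (fun x => ⟨x.2, x.1 \ x.2⟩) (fun x => ⟨x.1 ∪ x.2, x.1⟩)
    ?_ ?_ ?_ ?_ ?_
  · rintro ⟨S, T⟩ hx
    rw [mem_sigma] at hx ⊢
    refine ⟨mem_powerset.mpr (subset_univ _), mem_powerset.mpr ?_⟩
    intro y hy
    rw [mem_compl]
    exact fun hyT => (mem_sdiff.mp hy).2 hyT
  · rintro ⟨T, X⟩ hx
    rw [mem_sigma] at hx ⊢
    exact ⟨mem_powerset.mpr (subset_univ _), mem_powerset.mpr subset_union_left⟩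
  · rintro ⟨S, T⟩ hx
    rw [mem_sigma] at hx
    have hTS : T ⊆ S := mem_powerset.mp hx.2
    simp [Finset.union_sdiff_of_subset hTS]
  · rintro ⟨T, X⟩ hx
    rw [mem_sigma] at hx
    have hX : X ⊆ Tᶜ := mem_powerset.mp hx.2
    have hd : Disjoint T X := (disjoint_compl_right).mono_right hX
    simp [Finset.union_sdiff_cancel_left hd]
  · rintro ⟨S, T⟩ hx
    rw [mem_sigma] at hx
    have hTS : T ⊆ S := mem_powerset.mp hx.2
    simp [Finset.union_sdiff_of_subset hTS]

lemma sum_powerset_sdiff {M α : Type*} [AddCommMonoid M] [DecidableEq α] (w : Finset α)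
    (F : Finset α → Finset α → M) :
    ∑ X ∈ w.powerset, ∑ U ∈ (w \ X).powerset, F X U
      = ∑ V ∈ w.powerset, ∑ U ∈ V.powerset, F (V \ U) U := by
  rw [Finset.sum_sigma', Finset.sum_sigma']
  refine Finset.sum_nbij' (fun x => ⟨x.1 ∪ x.2, x.2⟩) (fun x => ⟨x.1 \ x.2, x.2⟩)
    ?_ ?_ ?_ ?_ ?_
  · rintro ⟨X, U⟩ hx
    rw [mem_sigma] at hx ⊢
    have hX : X ⊆ w := mem_powerset.mp hx.1
    have hU : U ⊆ w \ X := mem_powerset.mp hx.2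
    exact ⟨mem_powerset.mpr (union_subset hX (hU.trans sdiff_subset)),
      mem_powerset.mpr subset_union_right⟩
  · rintro ⟨V, U⟩ hx
    rw [mem_sigma] at hx ⊢
    have hV : V ⊆ w := mem_powerset.mp hx.1
    have hU : U ⊆ V := mem_powerset.mp hx.2
    refine ⟨mem_powerset.mpr (sdiff_subset.trans hV), mem_powerset.mpr ?_⟩
    intro y hy
    exact mem_sdiff.mpr ⟨hV (hU hy), fun h => (mem_sdiff.mp h).2 hy⟩
  · rintro ⟨X, U⟩ hx
    rw [mem_sigma] at hx
    have hU : U ⊆ w \ X := mem_powerset.mp hx.2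
    have hd : Disjoint X U := (sdiff_disjoint.mono_left hU).symm
    simp [Finset.union_sdiff_cancel_right hd]
  · rintro ⟨V, U⟩ hx
    rw [mem_sigma] at hx
    have hU : U ⊆ V := mem_powerset.mp hx.2
    simp [Finset.sdiff_union_of_subset hU]
  · rintro ⟨X, U⟩ hx
    rw [mem_sigma] at hx
    have hU : U ⊆ w \ X := mem_powerset.mp hx.2
    have hd : Disjoint X U := (sdiff_disjoint.mono_left hU).symm
    simp [Finset.union_sdiff_cancel_right hd]

lemma compl_union' {α : Type*} [Fintype α] [DecidableEq α] (s t : Finset α) :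
    (s ∪ t)ᶜ = sᶜ \ t := by
  rw [compl_union, sdiff_eq]
  rfl

lemma Q_cancel {α : Type*} [Fintype α] [DecidableEq α] (D D' : A → A) (a : α → A) :
    ∑ S ∈ (univ : Finset α).powerset, Qf D D' S a
      = ∑ S ∈ (univ : Finset α).powerset, Qf D' D S a := by
  simp only [Q_expand]
  rw [Finset.sum_congr rfl fun S (_ : S ∈ (univ : Finset α).powerset) =>
        Finset.sum_sigma' Sᶜ.powerset (fun _ => S.powerset) _,
      Finset.sum_congr rfl fun S (_ : S ∈ (univ : Finset α).powerset) =>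
        Finset.sum_sigma' Sᶜ.powerset (fun _ => S.powerset) _,
      Finset.sum_sigma' (univ : Finset α).powerset
        (fun S => Sᶜ.powerset.sigma fun _ => S.powerset) _,
      Finset.sum_sigma' (univ : Finset α).powerset
        (fun S => Sᶜ.powerset.sigma fun _ => S.powerset) _]
  refine Finset.sum_nbij' (fun x => ⟨x.1ᶜ, x.2.2, x.2.1⟩) (fun x => ⟨x.1ᶜ, x.2.2, x.2.1⟩)
    ?_ ?_ ?_ ?_ ?_
  · rintro ⟨S, U, T⟩ hx
    simp only [mem_sigma, mem_powerset] at hx ⊢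
    exact ⟨subset_univ _, by rw [compl_compl]; exact hx.2.2, hx.2.1⟩
  · rintro ⟨S, U, T⟩ hx
    simp only [mem_sigma, mem_powerset] at hx ⊢
    exact ⟨subset_univ _, by rw [compl_compl]; exact hx.2.2, hx.2.1⟩
  · rintro ⟨S, U, T⟩ hx
    simp [compl_compl]
  · rintro ⟨S, U, T⟩ hx
    simp [compl_compl]
  · rintro ⟨S, U, T⟩ hx
    simp only [compl_compl]
    rw [mul_comm ((-1 : ℤ) ^ (Sᶜ.card - U.card)) ((-1 : ℤ) ^ (S.card - T.card))]
    congr 1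
    ring

lemma inner_eval {α R : Type*} [Fintype α] [DecidableEq α] [Semiring R] [Module R A]
    (E : A →ₗ[R] A) (D' : A → A) (a : α → A) (T : Finset α) :
    ∑ V ∈ Tᶜ.powerset, ∑ U ∈ V.powerset,
        ((-1 : ℤ) ^ ((Tᶜ \ (V \ U)).card - U.card)
            * (-1 : ℤ) ^ ((T ∪ (V \ U)).card - T.card)) •
          (E (D' (∏ i ∈ T, a i) * ((∏ i ∈ (T ∪ (V \ U)) \ T, a i) * ∏ i ∈ U, a i))
            * ∏ i ∈ (Tᶜ \ (V \ U)) \ U, a i)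
      = (-1 : ℤ) ^ Tᶜ.card • (E (D' (∏ i ∈ T, a i)) * ∏ i ∈ Tᶜ, a i) := by
  have hstep : ∀ V ∈ Tᶜ.powerset, (∑ U ∈ V.powerset,
      ((-1 : ℤ) ^ ((Tᶜ \ (V \ U)).card - U.card)
          * (-1 : ℤ) ^ ((T ∪ (V \ U)).card - T.card)) •
        (E (D' (∏ i ∈ T, a i) * ((∏ i ∈ (T ∪ (V \ U)) \ T, a i) * ∏ i ∈ U, a i))
          * ∏ i ∈ (Tᶜ \ (V \ U)) \ U, a i))
      = if V = (∅ : Finset α) then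
          (-1 : ℤ) ^ Tᶜ.card • (E (D' (∏ i ∈ T, a i) * ∏ i ∈ V, a i) * ∏ i ∈ Tᶜ \ V, a i)
        else 0 := by
    intro V hV
    have hVT : V ⊆ Tᶜ := mem_powerset.mp hV
    have h1 : ∀ U ∈ V.powerset,
        ((-1 : ℤ) ^ ((Tᶜ \ (V \ U)).card - U.card)
            * (-1 : ℤ) ^ ((T ∪ (V \ U)).card - T.card)) •
          (E (D' (∏ i ∈ T, a i) * ((∏ i ∈ (T ∪ (V \ U)) \ T, a i) * ∏ i ∈ U, a i))
            * ∏ i ∈ (Tᶜ \ (V \ U)) \ U, a i)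
        = (-1 : ℤ) ^ U.card •
            ((-1 : ℤ) ^ Tᶜ.card •
              (E (D' (∏ i ∈ T, a i) * ∏ i ∈ V, a i) * ∏ i ∈ Tᶜ \ V, a i)) := by
      intro U hU
      have hUV : U ⊆ V := mem_powerset.mp hU
      have hXU : Disjoint (V \ U) U := sdiff_disjoint
      have hTX : Disjoint T (V \ U) :=
        disjoint_compl_right.mono_right ((sdiff_subset).trans hVT)
      have hXUV : (V \ U) ∪ U = V := Finset.sdiff_union_of_subset hUV
      have hsd : (T ∪ (V \ U)) \ T = V \ U := Finset.union_sdiff_cancel_left hTX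
      have hsd2 : (Tᶜ \ (V \ U)) \ U = Tᶜ \ V := by
        rw [sdiff_sdiff_left]
        rw [show (V \ U) ⊔ U = V from hXUV]
      have hprod : (∏ i ∈ V \ U, a i) * ∏ i ∈ U, a i = ∏ i ∈ V, a i := by
        rw [← Finset.prod_union hXU, hXUV]
      have hcX : (V \ U).card + U.card = V.card := by
        rw [← Finset.card_union_of_disjoint hXU, hXUV]
      have hcV : V.card ≤ Tᶜ.card := card_le_card hVT
      have hcard1 : (T ∪ (V \ U)).card - T.card = (V \ U).card := by
        rw [Finset.card_union_of_disjoint hTX, Nat.add_sub_cancel_left]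
      have hcard2 : (Tᶜ \ (V \ U)).card = Tᶜ.card - (V \ U).card :=
        Finset.card_sdiff_of_subset ((sdiff_subset).trans hVT)
      have hsign : (-1 : ℤ) ^ (Tᶜ.card - (V \ U).card - U.card) * (-1 : ℤ) ^ (V \ U).card
          = (-1 : ℤ) ^ Tᶜ.card * (-1 : ℤ) ^ U.card := by
        rw [npow_neg_one_sub (show U.card ≤ Tᶜ.card - (V \ U).card by omega),
          npow_neg_one_sub (show (V \ U).card ≤ Tᶜ.card by omega)]
        linear_combination ((-1 : ℤ) ^ Tᶜ.card * (-1 : ℤ) ^ U.card)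
          * sq_neg_one_pow (V \ U).card
      rw [hsd, hsd2, hcard1, hcard2, hprod, hsign, mul_comm ((-1 : ℤ) ^ Tᶜ.card), mul_smul]
    rw [Finset.sum_congr rfl h1, ← Finset.sum_smul, Finset.sum_powerset_neg_one_pow_card]
    split_ifs with h
    · rw [one_smul]
    · rw [zero_smul]
  rw [Finset.sum_congr rfl hstep, Finset.sum_ite_eq' Tᶜ.powerset (∅ : Finset α),
    if_pos (mem_powerset.mpr (empty_subset _))]
  rw [Finset.prod_empty, mul_one, Finset.sdiff_empty]

lemma P_main {α R : Type*} [Fintype α] [DecidableEq α] [Semiring R] [Module R A]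
    (E : A →ₗ[R] A) (D' : A → A) (a : α → A) :
    ∑ S ∈ (univ : Finset α).powerset, Pf ⇑E D' S a
      = kos (fun x => E (D' x)) univ a := by
  simp only [P_expand]
  calc
    ∑ S ∈ (univ : Finset α).powerset, ∑ U ∈ Sᶜ.powerset, ∑ T ∈ S.powerset,
        ((-1 : ℤ) ^ (Sᶜ.card - U.card) * (-1 : ℤ) ^ (S.card - T.card)) •
          (E (D' (∏ i ∈ T, a i) * ((∏ i ∈ S \ T, a i) * ∏ i ∈ U, a i)) * ∏ i ∈ Sᶜ \ U, a i)
      = ∑ S ∈ (univ : Finset α).powerset, ∑ T ∈ S.powerset, ∑ U ∈ Sᶜ.powerset,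
        ((-1 : ℤ) ^ (Sᶜ.card - U.card) * (-1 : ℤ) ^ (S.card - T.card)) •
          (E (D' (∏ i ∈ T, a i) * ((∏ i ∈ S \ T, a i) * ∏ i ∈ U, a i)) * ∏ i ∈ Sᶜ \ U, a i) :=
        Finset.sum_congr rfl fun S _ => Finset.sum_comm
    _ = ∑ T ∈ (univ : Finset α).powerset, ∑ X ∈ Tᶜ.powerset, ∑ U ∈ (T ∪ X)ᶜ.powerset,
        ((-1 : ℤ) ^ ((T ∪ X)ᶜ.card - U.card) * (-1 : ℤ) ^ ((T ∪ X).card - T.card)) •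
          (E (D' (∏ i ∈ T, a i) * ((∏ i ∈ (T ∪ X) \ T, a i) * ∏ i ∈ U, a i))
            * ∏ i ∈ (T ∪ X)ᶜ \ U, a i) :=
        sum_powerset_pair fun S T => ∑ U ∈ Sᶜ.powerset,
          ((-1 : ℤ) ^ (Sᶜ.card - U.card) * (-1 : ℤ) ^ (S.card - T.card)) •
            (E (D' (∏ i ∈ T, a i) * ((∏ i ∈ S \ T, a i) * ∏ i ∈ U, a i)) * ∏ i ∈ Sᶜ \ U, a i)
    _ = ∑ T ∈ (univ : Finset α).powerset, ∑ X ∈ Tᶜ.powerset, ∑ U ∈ (Tᶜ \ X).powerset,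
        ((-1 : ℤ) ^ ((Tᶜ \ X).card - U.card) * (-1 : ℤ) ^ ((T ∪ X).card - T.card)) •
          (E (D' (∏ i ∈ T, a i) * ((∏ i ∈ (T ∪ X) \ T, a i) * ∏ i ∈ U, a i))
            * ∏ i ∈ (Tᶜ \ X) \ U, a i) := by
        simp only [compl_union']
    _ = ∑ T ∈ (univ : Finset α).powerset, ∑ V ∈ Tᶜ.powerset, ∑ U ∈ V.powerset,
        ((-1 : ℤ) ^ ((Tᶜ \ (V \ U)).card - U.card) * (-1 : ℤ) ^ ((T ∪ (V \ U)).card - T.card)) •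
          (E (D' (∏ i ∈ T, a i) * ((∏ i ∈ (T ∪ (V \ U)) \ T, a i) * ∏ i ∈ U, a i))
            * ∏ i ∈ (Tᶜ \ (V \ U)) \ U, a i) :=
        Finset.sum_congr rfl fun T _ => sum_powerset_sdiff Tᶜ fun X U =>
          ((-1 : ℤ) ^ ((Tᶜ \ X).card - U.card) * (-1 : ℤ) ^ ((T ∪ X).card - T.card)) •
            (E (D' (∏ i ∈ T, a i) * ((∏ i ∈ (T ∪ X) \ T, a i) * ∏ i ∈ U, a i))
              * ∏ i ∈ (Tᶜ \ X) \ U, a i)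
    _ = ∑ T ∈ (univ : Finset α).powerset,
          (-1 : ℤ) ^ Tᶜ.card • (E (D' (∏ i ∈ T, a i)) * ∏ i ∈ Tᶜ, a i) :=
        Finset.sum_congr rfl fun T _ => inner_eval E D' a T
    _ = kos (fun x => E (D' x)) univ a := by
        unfold kos
        refine Finset.sum_congr rfl fun T _ => ?_
        rw [card_univ, ← compl_eq_univ_sdiff, Finset.card_compl]

end Aux

/-- the Koszul bracket construction is a Lie algebra morphism; in Taylor
coefficients, for the commutator `Δ∘Δ′ − Δ′∘Δ`:
`K([Δ,Δ′])_n(a_1,…,a_n) = Σ_{i=1}^{n} Σ_{|S|=i} [K(Δ)_{n−i+1}(K(Δ′)_i((a_s)_{s∈S}),(a_j)_{j∉S})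
  − K(Δ′)_{n−i+1}(K(Δ)_i((a_s)_{s∈S}),(a_j)_{j∉S})]`. -/
theorem koszul_commutator (K A : Type*) [Field K] [CharZero K]
    [CommRing A] [Algebra K A] (Δ Δ' : A →ₗ[K] A) (hΔ : Δ 1 = 0) (hΔ' : Δ' 1 = 0) :
    ∀ (n : ℕ), 1 ≤ n → ∀ a : Fin n → A,
      koszul (⇑(Δ ∘ₗ Δ' - Δ' ∘ₗ Δ)) n a =
        ∑ i ∈ Finset.Icc 1 n,
          ∑ S ∈ (Finset.univ : Finset (Fin n)).powerset.filter fun S => S.card = i,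
            (koszul (⇑Δ) (Sᶜ.card + 1)
                (Fin.cons (koszul (⇑Δ') S.card (restr a S)) (restr a Sᶜ)) -
              koszul (⇑Δ') (Sᶜ.card + 1)
                (Fin.cons (koszul (⇑Δ) S.card (restr a S)) (restr a Sᶜ))) := by
  intro n hn a
  classical
  have step1 : ∀ i ∈ Finset.Icc 1 n,
      ∀ S ∈ (Finset.univ : Finset (Fin n)).powerset.filter (fun S => S.card = i),
      (koszul (⇑Δ) (Sᶜ.card + 1)
          (Fin.cons (koszul (⇑Δ') S.card (restr a S)) (restr a Sᶜ)) -
        koszul (⇑Δ') (Sᶜ.card + 1)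
          (Fin.cons (koszul (⇑Δ) S.card (restr a S)) (restr a Sᶜ)))
      = (Pf ⇑Δ ⇑Δ' S a - Qf ⇑Δ ⇑Δ' S a) - (Pf ⇑Δ' ⇑Δ S a - Qf ⇑Δ' ⇑Δ S a) := by
    intro i _ S _
    rw [kos_restr ⇑Δ' hΔ' S a, kos_restr ⇑Δ hΔ S a,
      koszul_cons_restr ⇑Δ hΔ S (kos ⇑Δ' S a) a,
      koszul_cons_restr ⇑Δ' hΔ' S (kos ⇑Δ S a) a]
    rfl
  rw [Finset.sum_congr rfl fun i hi => Finset.sum_congr rfl (step1 i hi),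
    Finset.sum_fiberwise_eq_sum_filter (univ : Finset (Fin n)).powerset (Finset.Icc 1 n)
      (fun S => S.card)
      (fun S => (Pf ⇑Δ ⇑Δ' S a - Qf ⇑Δ ⇑Δ' S a) - (Pf ⇑Δ' ⇑Δ S a - Qf ⇑Δ' ⇑Δ S a))]
  have step2 : ∑ S ∈ (univ : Finset (Fin n)).powerset.filter (fun S => S.card ∈ Finset.Icc 1 n),
      ((Pf ⇑Δ ⇑Δ' S a - Qf ⇑Δ ⇑Δ' S a) - (Pf ⇑Δ' ⇑Δ S a - Qf ⇑Δ' ⇑Δ S a))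
      = ∑ S ∈ (univ : Finset (Fin n)).powerset,
      ((Pf ⇑Δ ⇑Δ' S a - Qf ⇑Δ ⇑Δ' S a) - (Pf ⇑Δ' ⇑Δ S a - Qf ⇑Δ' ⇑Δ S a)) := by
    rw [← Finset.sum_filter_add_sum_filter_not (univ : Finset (Fin n)).powerset
      (fun S => S.card ∈ Finset.Icc 1 n)]
    have h0 : ∑ S ∈ (univ : Finset (Fin n)).powerset.filter
        (fun S => ¬ S.card ∈ Finset.Icc 1 n),
        ((Pf ⇑Δ ⇑Δ' S a - Qf ⇑Δ ⇑Δ' S a) - (Pf ⇑Δ' ⇑Δ S a - Qf ⇑Δ' ⇑Δ S a)) = 0 := by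
      refine Finset.sum_eq_zero fun S hS => ?_
      obtain ⟨hS1, hS2⟩ := Finset.mem_filter.mp hS
      have hcard : S.card ≤ n := by
        simpa [card_univ] using card_le_card (mem_powerset.mp hS1)
      rw [Finset.mem_Icc] at hS2
      have : S.card = 0 := by omega
      have hS0 : S = ∅ := Finset.card_eq_zero.mp this
      subst hS0
      have hkos : ∀ (D : A → A), D 1 = 0 → kos D (∅ : Finset (Fin n)) a = 0 := by
        intro D hD
        unfold kos
        simp [hD]
      unfold Pf Qf
      rw [hkos ⇑Δ hΔ, hkos ⇑Δ' hΔ']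
      simp
    rw [h0, add_zero]
  rw [step2, Finset.sum_sub_distrib, Finset.sum_sub_distrib, Finset.sum_sub_distrib,
    Q_cancel ⇑Δ ⇑Δ' a, sub_sub_sub_cancel_right, P_main Δ ⇑Δ' a, P_main Δ' ⇑Δ a]
  have hc : (⇑(Δ ∘ₗ Δ' - Δ' ∘ₗ Δ) : A → A) 1 = 0 := by
    simp [hΔ, hΔ']
  rw [koszul_eq_kos _ hc a]
  unfold kos
  rw [← Finset.sum_sub_distrib]
  refine Finset.sum_congr rfl fun t _ => ?_
  simp only [LinearMap.sub_apply, LinearMap.coe_comp, Function.comp_apply]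
  rw [sub_mul, smul_sub]
end
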